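/- arXiv:2405.14840 — 4 statements merged into one kernel-verified Lean document; each statement's English description precedes it below -/
import Mathlib

section
/- Assume ∫ π_β (|ℓ| + |log q₀|) dμ < ∞ for every β ∈ [0,1], and assume η ↦ Z_η is twice continuously differentiable on [0,1] with derivatives given by differentiation under the integral sign, i.e., Z′_η = ∫ γ_η ℓ dμ and Z″_η = ∫ γ_η ℓ² dμ, both finite and continuous in η. Then the AIS gap under perfect transitions with equally spaced temperatures β_k = k/K satisfies lim_{K→∞} K · ∑_{k=1}^{K} D_KL(π_{(k−1)/K} ‖ π_{k/K}) = (1/2) D_KL(p ‖ q₀) + (1/2) D_KL(q₀ ‖ p), i.e., in the limit of many transitions the gap is, to leading order 1/K, proportional to the symmetrized Kullback–Leibler divergence between the initial distribution q₀ and the target distribution p. -/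
open MeasureTheory Real Filter
open Set Topology

noncomputable section

variable {X : Type*} [MeasurableSpace X]

/-- Geometric annealing path `γ_η = q₀^{1-η} p^η`, set to `0` where `q₀` vanishes. -/
def gammaPath (q0 p : X → ℝ) (η : ℝ) (z : X) : ℝ :=
  if q0 z = 0 then 0 else q0 z ^ (1 - η) * p z ^ η

/-- Normalization constant `Z_η = ∫ γ_η dμ` along the annealing path. -/
def Zpath (μ : Measure X) (q0 p : X → ℝ) (η : ℝ) : ℝ :=
  ∫ z, gammaPath q0 p η z ∂μ

/-- Normalized annealing density `π_η = γ_η / Z_η`. -/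
def piPath (μ : Measure X) (q0 p : X → ℝ) (η : ℝ) (z : X) : ℝ :=
  gammaPath q0 p η z / Zpath μ q0 p η

/-- Kullback–Leibler divergence `D_KL(a‖b) = ∫ a log(a/b) dμ` between densities. -/
def KLdiv (μ : Measure X) (a b : X → ℝ) : ℝ :=
  ∫ z, a z * Real.log (a z / b z) ∂μ


/-- `ℓ = log(p/q₀)`. -/
def ell (q0 p : X → ℝ) (z : X) : ℝ := Real.log (p z / q0 z)

lemma per_k_estimate (f g h : ℝ → ℝ) {ε δ : ℝ} (hε : 0 < ε) (hδ : 0 < δ)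
    (hf : ∀ x ∈ Set.Icc (0:ℝ) 1, HasDerivWithinAt f (g x) (Set.Icc 0 1) x)
    (hg : ∀ x ∈ Set.Icc (0:ℝ) 1, HasDerivWithinAt g (h x) (Set.Icc 0 1) x)
    (hgc : ContinuousOn g (Set.Icc 0 1))
    (hUC : ∀ x ∈ Set.Icc (0:ℝ) 1, ∀ y ∈ Set.Icc (0:ℝ) 1, dist x y < δ → dist (h x) (h y) < ε)
    {a b : ℝ} (ha : a ∈ Set.Icc (0:ℝ) 1) (hb : b ∈ Set.Icc (0:ℝ) 1)
    (hab : a < b) (hbd : b - a < δ) :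
    |(b - a)⁻¹ * (f b - f a) - g a - (g b - g a)/2| ≤ 2 * ε * (b - a) := by
  have hsub : Set.Icc a b ⊆ Set.Icc (0:ℝ) 1 := Set.Icc_subset_Icc ha.1 hb.2
  have hKpos : (0:ℝ) < b - a := by linarith
  -- claim1
  have claim1 : ∀ t ∈ Set.Icc a b, |g t - g a - h a * (t - a)| ≤ ε * (b - a) := by
    intro t ht
    have hderiv : ∀ x ∈ Set.Icc a b,
        HasDerivWithinAt (fun t => g t - h a * t) (h x - h a) (Set.Icc a b) x := by
      intro x hx
      exact ((hg x (hsub hx)).mono hsub).sub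
        (by simpa using (hasDerivWithinAt_id x (Set.Icc a b)).const_mul (h a))
    have hbound : ∀ x ∈ Set.Icc a b, ‖h x - h a‖ ≤ ε := by
      intro x hx
      have := hUC x (hsub hx) a ha (by
        rw [Real.dist_eq]
        rw [abs_of_nonneg (by linarith [hx.1])]
        linarith [hx.2])
      rw [Real.dist_eq] at this
      exact le_of_lt this
    have := (convex_Icc a b).norm_image_sub_le_of_norm_hasDerivWithin_le hderiv hbound
      (Set.left_mem_Icc.2 hab.le) ht
    rw [Real.norm_eq_abs, Real.norm_eq_abs] at this
    have h2 : |g t - h a * t - (g a - h a * a)| = |g t - g a - h a * (t - a)| := by ring_nf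
    rw [h2] at this
    calc |g t - g a - h a * (t - a)| ≤ ε * |t - a| := this
      _ ≤ ε * (b - a) := by
          apply mul_le_mul_of_nonneg_left _ hε.le
          rw [abs_of_nonneg (by linarith [ht.1])]
          linarith [ht.2]
  -- FTC
  have hfc : ContinuousOn f (Set.Icc (0:ℝ) 1) := fun x hx => (hf x hx).continuousWithinAt
  have hftc : ∫ t in a..b, g t = f b - f a := by
    apply intervalIntegral.integral_eq_sub_of_hasDeriv_right_of_le hab.le (hfc.mono hsub)
    · intro x hx
      have hx' : x ∈ Set.Ioo (0:ℝ) 1 :=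
        ⟨lt_of_le_of_lt ha.1 hx.1, lt_of_lt_of_le hx.2 hb.2⟩
      exact ((hf x (Set.Ioo_subset_Icc_self hx')).hasDerivAt
        (Icc_mem_nhds hx'.1 hx'.2)).hasDerivWithinAt
    · exact (hgc.mono (by rw [Set.uIcc_of_le hab.le]; exact hsub)).intervalIntegrable
  have hgint : IntervalIntegrable g volume a b :=
    (hgc.mono (by rw [Set.uIcc_of_le hab.le]; exact hsub)).intervalIntegrable
  -- linear integral
  have hlin : ∫ t in a..b, h a * (t - a) = h a * ((b - a)^2 / 2) := by
    rw [intervalIntegral.integral_const_mul]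
    congr 1
    rw [intervalIntegral.integral_sub intervalIntegral.intervalIntegrable_id (intervalIntegrable_const)]
    rw [integral_id, intervalIntegral.integral_const]
    simp [smul_eq_mul]
    ring
  -- assemble
  have hane : b - a ≠ 0 := ne_of_gt hKpos
  have eqA : ∫ t in a..b, (g t - g a) = f b - f a - g a * (b - a) := by
    rw [intervalIntegral.integral_sub hgint intervalIntegrable_const, hftc,
      intervalIntegral.integral_const]
    simp [smul_eq_mul]
    ring
  have e2 : |(∫ t in a..b, (g t - g a)) - h a * ((b - a)^2/2)| ≤ ε * (b - a) * (b - a) := by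
    have hsplit : (∫ t in a..b, (g t - g a)) - h a * ((b - a)^2/2)
        = ∫ t in a..b, (g t - g a - h a * (t - a)) := by
      rw [intervalIntegral.integral_sub
        (hgint.sub intervalIntegrable_const)
        ((by fun_prop : Continuous fun t : ℝ => h a * (t - a)).intervalIntegrable a b),
        hlin]
    rw [hsplit]
    have := intervalIntegral.norm_integral_le_of_norm_le_const (C := ε * (b - a))
      (f := fun t => g t - g a - h a * (t - a)) (a := a) (b := b)
      (fun x hx => by
        rw [Real.norm_eq_abs]
        exact claim1 x (Set.Ioc_subset_Icc_self ((Set.uIoc_of_le hab.le ▸ hx)))) 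
    rw [Real.norm_eq_abs, abs_of_pos hKpos] at this
    exact this
  have e3 : |g b - g a - h a * (b - a)| ≤ ε * (b - a) :=
    claim1 b (Set.right_mem_Icc.2 hab.le)
  have key : (b - a)⁻¹ * (f b - f a) - g a - (g b - g a)/2
      = (b - a)⁻¹ * ((∫ t in a..b, (g t - g a)) - h a * ((b - a)^2/2))
        - (g b - g a - h a * (b - a))/2 := by
    rw [eqA]
    field_simp
    ring
  rw [key]
  have t1 : |(b - a)⁻¹ * ((∫ t in a..b, (g t - g a)) - h a * ((b - a)^2/2))|
      ≤ ε * (b - a) := by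
    rw [abs_mul, abs_inv, abs_of_pos hKpos]
    rw [inv_mul_le_iff₀ hKpos]
    exact e2.trans (le_of_eq (by ring))
  refine (abs_sub _ _).trans ?_
  rw [abs_div, abs_two]
  nlinarith [t1, e3]

lemma sum_taylor_tendsto (f g h : ℝ → ℝ)
    (hf : ∀ x ∈ Set.Icc (0:ℝ) 1, HasDerivWithinAt f (g x) (Set.Icc 0 1) x)
    (hg : ∀ x ∈ Set.Icc (0:ℝ) 1, HasDerivWithinAt g (h x) (Set.Icc 0 1) x)
    (hgc : ContinuousOn g (Set.Icc 0 1))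
    (hh : ContinuousOn h (Set.Icc 0 1)) :
    Tendsto (fun K : ℕ => ∑ i ∈ Finset.range K,
      ((K:ℝ) * (f ((i+1)/K) - f (i/K)) - g (i/K))) atTop (𝓝 ((g 1 - g 0)/2)) := by
  rw [Metric.tendsto_atTop]
  intro ε hε
  have hε' : 0 < ε/8 := by linarith
  obtain ⟨δ, hδ, hUC⟩ := Metric.uniformContinuousOn_iff.mp
    (isCompact_Icc.uniformContinuousOn_of_continuous hh) (ε/8) hε'
  obtain ⟨N, hN⟩ := exists_nat_gt (1/δ)
  refine ⟨N + 1, fun K hK => ?_⟩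
  have hK1 : 1 ≤ K := le_trans (Nat.le_add_left 1 N) hK
  have hK0 : (0:ℝ) < K := by exact_mod_cast hK1
  have hKne : (K:ℝ) ≠ 0 := ne_of_gt hK0
  have hinv : (1:ℝ)/K < δ := by
    rw [div_lt_iff₀ hK0]
    have h1 : 1/δ < (K:ℝ) := lt_of_lt_of_le hN (by exact_mod_cast le_trans (Nat.le_succ N) hK)
    rw [div_lt_iff₀ hδ] at h1
    linarith
  have htel : (g 1 - g 0)/2 = ∑ i ∈ Finset.range K, (g ((i+1)/K) - g ((i:ℝ)/K))/2 := by
    rw [← Finset.sum_div]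
    congr 1
    have := Finset.sum_range_sub (f := fun n : ℕ => g ((n:ℝ)/K)) K
    simp only [Nat.cast_add, Nat.cast_one] at this
    rw [this, div_self hKne]
    norm_num
  rw [Real.dist_eq, htel, ← Finset.sum_sub_distrib]
  have hbound : ∀ i ∈ Finset.range K,
      |(K:ℝ) * (f ((i+1)/K) - f ((i:ℝ)/K)) - g ((i:ℝ)/K) - (g ((i+1)/K) - g ((i:ℝ)/K))/2|
        ≤ 2 * (ε/8) * (1/K) := by
    intro i hi
    have hiK : (i:ℝ) < K := by exact_mod_cast Finset.mem_range.mp hi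
    have hiK' : (i:ℝ) + 1 ≤ K := by exact_mod_cast Finset.mem_range.mp hi
    have ha : (i:ℝ)/K ∈ Set.Icc (0:ℝ) 1 :=
      ⟨div_nonneg (Nat.cast_nonneg i) hK0.le, by rw [div_le_one hK0]; linarith⟩
    have hb : ((i:ℝ)+1)/K ∈ Set.Icc (0:ℝ) 1 :=
      ⟨div_nonneg (by positivity) hK0.le, by rw [div_le_one hK0]; linarith⟩
    have hab : (i:ℝ)/K < ((i:ℝ)+1)/K := by
      apply div_lt_div_of_pos_right (by linarith) hK0
    have hdiff : ((i:ℝ)+1)/K - (i:ℝ)/K = 1/K := by ring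
    have hest := per_k_estimate f g h hε' hδ hf hg hgc hUC ha hb hab
      (by rw [hdiff]; exact hinv)
    rw [hdiff, one_div, inv_inv] at hest
    rw [one_div]
    exact hest
  calc |∑ i ∈ Finset.range K,
        ((K:ℝ) * (f ((i+1)/K) - f ((i:ℝ)/K)) - g ((i:ℝ)/K) - (g ((i+1)/K) - g ((i:ℝ)/K))/2)|
      ≤ ∑ i ∈ Finset.range K,
        |(K:ℝ) * (f ((i+1)/K) - f ((i:ℝ)/K)) - g ((i:ℝ)/K) - (g ((i+1)/K) - g ((i:ℝ)/K))/2| :=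
        Finset.abs_sum_le_sum_abs _ _
    _ ≤ ∑ _i ∈ Finset.range K, 2 * (ε/8) * (1/K) := Finset.sum_le_sum hbound
    _ = (K:ℝ) * (2 * (ε/8) * (1/K)) := by rw [Finset.sum_const, Finset.card_range]; ring
    _ = ε/4 := by field_simp; ring
    _ < ε := by linarith

lemma kl_identity (μ : Measure X) (q0 p : X → ℝ)
    (hgood : ∀ᵐ z ∂μ, (0 < q0 z ∧ 0 < p z) ∨ (q0 z = 0 ∧ p z = 0))
    {a b : ℝ}
    (hZa : 0 < Zpath μ q0 p a) (hZb : 0 < Zpath μ q0 p b)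
    (hγa : Integrable (gammaPath q0 p a) μ)
    (hγla : Integrable (fun z => gammaPath q0 p a z * ell q0 p z) μ) :
    KLdiv μ (piPath μ q0 p a) (piPath μ q0 p b)
      = (a - b) * ((∫ z, gammaPath q0 p a z * ell q0 p z ∂μ) / Zpath μ q0 p a)
        + Real.log (Zpath μ q0 p b) - Real.log (Zpath μ q0 p a) := by
  have hZa' : Zpath μ q0 p a ≠ 0 := ne_of_gt hZa
  have hZb' : Zpath μ q0 p b ≠ 0 := ne_of_gt hZb
  have hae : (fun z => piPath μ q0 p a z *
        Real.log (piPath μ q0 p a z / piPath μ q0 p b z))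
      =ᵐ[μ] fun z => (a - b) * (piPath μ q0 p a z * ell q0 p z)
        + (Real.log (Zpath μ q0 p b) - Real.log (Zpath μ q0 p a)) * piPath μ q0 p a z := by
    filter_upwards [hgood] with z hz
    rcases hz with ⟨hq, hp⟩ | ⟨hq, hp⟩
    · have hq0 : q0 z ≠ 0 := ne_of_gt hq
      have hp0 : p z ≠ 0 := ne_of_gt hp
      have hγaz : gammaPath q0 p a z = q0 z ^ (1-a) * p z ^ a := by
        rw [gammaPath, if_neg hq0]
      have hγbz : gammaPath q0 p b z = q0 z ^ (1-b) * p z ^ b := by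
        rw [gammaPath, if_neg hq0]
      have hγap : 0 < gammaPath q0 p a z := by
        rw [hγaz]; exact mul_pos (rpow_pos_of_pos hq _) (rpow_pos_of_pos hp _)
      have hγbp : 0 < gammaPath q0 p b z := by
        rw [hγbz]; exact mul_pos (rpow_pos_of_pos hq _) (rpow_pos_of_pos hp _)
      have hloga : Real.log (gammaPath q0 p a z)
          = (1-a) * Real.log (q0 z) + a * Real.log (p z) := by
        rw [hγaz, Real.log_mul (by positivity) (by positivity),
          Real.log_rpow hq, Real.log_rpow hp]
      have hlogb : Real.log (gammaPath q0 p b z)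
          = (1-b) * Real.log (q0 z) + b * Real.log (p z) := by
        rw [hγbz, Real.log_mul (by positivity) (by positivity),
          Real.log_rpow hq, Real.log_rpow hp]
      have hell : ell q0 p z = Real.log (p z) - Real.log (q0 z) :=
        Real.log_div hp0 hq0
      have hπa0 : piPath μ q0 p a z ≠ 0 := by
        rw [piPath]; positivity
      have hπb0 : piPath μ q0 p b z ≠ 0 := by
        rw [piPath]; positivity
      have hlog : Real.log (piPath μ q0 p a z / piPath μ q0 p b z)
          = (a - b) * ell q0 p z
            + (Real.log (Zpath μ q0 p b) - Real.log (Zpath μ q0 p a)) := by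
        rw [Real.log_div hπa0 hπb0, piPath, piPath,
          Real.log_div (ne_of_gt hγap) hZa', Real.log_div (ne_of_gt hγbp) hZb',
          hloga, hlogb, hell]
        ring
      rw [hlog]; ring
    · simp [piPath, gammaPath, hq]
  rw [KLdiv, integral_congr_ae hae]
  have hπl : Integrable (fun z => piPath μ q0 p a z * ell q0 p z) μ := by
    refine (hγla.div_const (Zpath μ q0 p a)).congr
      (Eventually.of_forall fun z => ?_)
    simp only [piPath]; ring
  have hπ : Integrable (piPath μ q0 p a) μ := hγa.div_const _
  rw [integral_add (hπl.const_mul _) (hπ.const_mul _),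
    integral_const_mul, integral_const_mul]
  have h1 : ∫ z, piPath μ q0 p a z * ell q0 p z ∂μ
      = (∫ z, gammaPath q0 p a z * ell q0 p z ∂μ) / Zpath μ q0 p a := by
    rw [← integral_div]
    refine integral_congr_ae (Eventually.of_forall fun z => ?_)
    simp only [piPath]; ring
  have h2 : ∫ z, piPath μ q0 p a z ∂μ = 1 := by
    simp only [piPath]
    rw [integral_div]
    exact div_self hZa'
  rw [h1, h2]; ring

lemma gamma_zero (q0 p : X → ℝ) : gammaPath q0 p 0 = q0 := by
  funext z
  rw [gammaPath]
  split_ifs with h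
  · rw [h]
  · rw [sub_zero, Real.rpow_one, Real.rpow_zero, mul_one]

lemma gamma_one_ae (μ : Measure X) (q0 p : X → ℝ) (hpnn : ∀ z, 0 ≤ p z)
    (hsupp : ∀ᵐ z ∂μ, 0 < p z → 0 < q0 z) :
    gammaPath q0 p 1 =ᵐ[μ] p := by
  filter_upwards [hsupp] with z h
  rw [gammaPath]
  split_ifs with hq
  · rcases (hpnn z).lt_or_eq with hp | hp
    · exact absurd (h hp) (by rw [hq]; exact lt_irrefl 0)
    · exact hp
  · rw [sub_self, Real.rpow_zero, Real.rpow_one, one_mul]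

lemma good_ae (μ : Measure X) (q0 p : X → ℝ)
    (hq0m : Measurable q0) (hq0nn : ∀ z, 0 ≤ q0 z) (hq0one : ∫ z, q0 z ∂μ = 1)
    (hpm : Measurable p) (hpnn : ∀ z, 0 ≤ p z)
    (hsupp : ∀ᵐ z ∂μ, 0 < p z → 0 < q0 z)
    (hZint : ∀ η ∈ Set.Icc (0:ℝ) 1, Integrable (gammaPath q0 p η) μ)
    (hZcont : ContinuousWithinAt (Zpath μ q0 p) (Set.Icc 0 1) 0) :
    ∀ᵐ z ∂μ, (0 < q0 z ∧ 0 < p z) ∨ (q0 z = 0 ∧ p z = 0) := by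
  have hq0int : Integrable q0 μ := gamma_zero q0 p ▸ hZint 0 ⟨le_refl 0, zero_le_one⟩
  have hpint : Integrable p μ :=
    (hZint 1 ⟨zero_le_one, le_refl 1⟩).congr (gamma_one_ae μ q0 p hpnn hsupp)
  set S : Set X := {z | 0 < q0 z} ∩ {z | p z = 0} with hS
  have hSmeas : MeasurableSet S :=
    (measurableSet_lt measurable_const hq0m).inter (hpm (measurableSet_singleton 0))
  have hmem : ∀ n : ℕ, (1:ℝ)/(n+1) ∈ Set.Icc (0:ℝ) 1 := by
    intro n
    constructor
    · positivity
    · rw [div_le_one (by positivity)]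
      linarith [Nat.cast_nonneg (α := ℝ) n]
  have hlim : Tendsto (fun n : ℕ => Zpath μ q0 p (1/(n+1))) atTop
      (𝓝 (∫ z, (if p z = 0 then 0 else q0 z) ∂μ)) := by
    simp only [Zpath]
    apply tendsto_integral_of_dominated_convergence (fun z => q0 z + p z)
    · exact fun n => (hZint (1/(n+1)) (hmem n)).aestronglyMeasurable
    · exact hq0int.add hpint
    · intro n
      refine Eventually.of_forall fun z => ?_
      rw [Real.norm_eq_abs, gammaPath]
      split_ifs with h
      · rw [abs_zero]; exact add_nonneg (hq0nn z) (hpnn z)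
      · have hq : 0 < q0 z := lt_of_le_of_ne (hq0nn z) (Ne.symm h)
        rw [abs_of_nonneg (mul_nonneg (Real.rpow_nonneg (hq0nn z) _) (Real.rpow_nonneg (hpnn z) _))]
        have hη1 : (0:ℝ) ≤ 1/((n:ℝ)+1) := by positivity
        have hη2 : (1:ℝ)/((n:ℝ)+1) ≤ 1 := (hmem n).2
        calc q0 z ^ (1 - 1/((n:ℝ)+1)) * p z ^ ((1:ℝ)/((n:ℝ)+1))
            ≤ (1 - 1/((n:ℝ)+1)) * q0 z + (1/((n:ℝ)+1)) * p z :=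
              Real.geom_mean_le_arith_mean2_weighted (by linarith) hη1
                (hq0nn z) (hpnn z) (by ring)
          _ ≤ q0 z + p z := by nlinarith [hq0nn z, hpnn z]
    · refine Eventually.of_forall fun z => ?_
      by_cases hp : p z = 0
      · rw [if_pos hp]
        by_cases hq : q0 z = 0
        · simp only [gammaPath, if_pos hq]
          exact tendsto_const_nhds
        · have : ∀ n : ℕ, gammaPath q0 p (1/(n+1)) z = 0 := fun n => by
            rw [gammaPath, if_neg hq, hp, Real.zero_rpow (by positivity), mul_zero]
          simp only [this]
          exact tendsto_const_nhds
      · rw [if_neg hp]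
        by_cases hq : q0 z = 0
        · simp only [gammaPath, if_pos hq]
          rw [hq]
          exact tendsto_const_nhds
        · have hqpos : 0 < q0 z := lt_of_le_of_ne (hq0nn z) (Ne.symm hq)
          have hppos : 0 < p z := lt_of_le_of_ne (hpnn z) (Ne.symm hp)
          have hc : ContinuousAt (fun η : ℝ => q0 z ^ (1-η) * p z ^ η) 0 := by
            exact ((Real.continuousAt_const_rpow (a := q0 z) hq).comp
              ((continuous_const.sub continuous_id).continuousAt)).mul
              (Real.continuousAt_const_rpow (a := p z) (ne_of_gt hppos))
          have h0 : (fun η : ℝ => q0 z ^ (1-η) * p z ^ η) 0 = q0 z := by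
            simp [Real.rpow_one, Real.rpow_zero]
          have hc2 := hc.tendsto
          simp only [sub_zero, Real.rpow_one, Real.rpow_zero, mul_one] at hc2
          have := hc2.comp tendsto_one_div_add_atTop_nhds_zero_nat
          refine this.congr fun n => ?_
          simp only [Function.comp, gammaPath, if_neg hq]
  have hZ0 : Zpath μ q0 p 0 = 1 := by
    rw [Zpath, gamma_zero q0 p, hq0one]
  have hη0 : Tendsto (fun n : ℕ => (1:ℝ)/(n+1)) atTop (𝓝[Set.Icc (0:ℝ) 1] 0) :=
    tendsto_nhdsWithin_of_tendsto_nhds_of_eventually_within _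
      tendsto_one_div_add_atTop_nhds_zero_nat (Eventually.of_forall hmem)
  have hZlim : Tendsto (fun n : ℕ => Zpath μ q0 p (1/(n+1))) atTop (𝓝 1) := by
    have := hZcont.tendsto.comp hη0
    rwa [hZ0] at this
  have hGeq : ∫ z, (if p z = 0 then 0 else q0 z) ∂μ = 1 :=
    tendsto_nhds_unique hlim hZlim
  have hSint : ∫ z in S, q0 z ∂μ = 0 := by
    have heq : (fun z => (if p z = 0 then 0 else q0 z))
        = fun z => q0 z - S.indicator q0 z := by
      funext z
      by_cases hp : p z = 0
      · by_cases hq : q0 z = 0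
        · have : z ∉ S := fun hmem => absurd hmem.1 (by simp [hq])
          simp [hp, hq, Set.indicator_of_notMem this]
        · have : z ∈ S := ⟨lt_of_le_of_ne (hq0nn z) (Ne.symm hq), hp⟩
          simp [hp, Set.indicator_of_mem this]
      · have : z ∉ S := fun hmem => hp hmem.2
        simp [hp, Set.indicator_of_notMem this]
    rw [heq] at hGeq
    rw [integral_sub hq0int (hq0int.indicator hSmeas), hq0one,
      integral_indicator hSmeas] at hGeq
    linarith
  have hSnull : μ S = 0 := by
    have h0 : q0 =ᵐ[μ.restrict S] 0 :=
      (setIntegral_eq_zero_iff_of_nonneg_ae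
        (Eventually.of_forall fun z => hq0nn z) hq0int.integrableOn).mp hSint
    have h3 : ∀ᵐ _z ∂(μ.restrict S), False := by
      filter_upwards [h0, ae_restrict_mem hSmeas] with z hz hmem
      exact (ne_of_gt hmem.1) (by simpa using hz)
    have h5 : μ.restrict S Set.univ = 0 := by simpa using ae_iff.mp h3
    rwa [Measure.restrict_apply_univ] at h5
  have hSae : ∀ᵐ z ∂μ, z ∉ S := by
    rw [ae_iff]
    simpa [not_not] using hSnull
  filter_upwards [hsupp, hSae] with z h1 h2
  rcases (hq0nn z).lt_or_eq with hq | hq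
  · rcases (hpnn z).lt_or_eq with hp | hp
    · exact Or.inl ⟨hq, hp⟩
    · exact absurd (⟨hq, hp.symm⟩ : z ∈ S) h2
  · rcases (hpnn z).lt_or_eq with hp | hp
    · exact absurd (h1 hp) (by rw [← hq]; exact lt_irrefl 0)
    · exact Or.inr ⟨hq.symm, hp.symm⟩

/-- In the limit of many transitions with equally spaced temperatures
`β_k = k/K`, `K` times the AIS gap under perfect transitions converges to the
symmetrized KL divergence `(1/2) D_KL(p‖q₀) + (1/2) D_KL(q₀‖p)`. -/
theorem ais_gap_tendsto_symmetrized_kl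
    (μ : Measure X) [SigmaFinite μ] (q0 p : X → ℝ)
    (hq0m : Measurable q0) (hq0nn : ∀ z, 0 ≤ q0 z) (hq0one : ∫ z, q0 z ∂μ = 1)
    (hpm : Measurable p) (hpnn : ∀ z, 0 ≤ p z) (hpone : ∫ z, p z ∂μ = 1)
    (hsupp : ∀ᵐ z ∂μ, 0 < p z → 0 < q0 z)
    (hZ : ∀ η ∈ Set.Icc (0 : ℝ) 1,
      Integrable (gammaPath q0 p η) μ ∧ 0 < Zpath μ q0 p η)
    (hπint : ∀ β ∈ Set.Icc (0 : ℝ) 1,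
      Integrable (fun z => piPath μ q0 p β z * (|ell q0 p z| + |Real.log (q0 z)|)) μ)
    (hZ' : ∀ η ∈ Set.Icc (0 : ℝ) 1,
      Integrable (fun z => gammaPath q0 p η z * ell q0 p z) μ ∧
      HasDerivWithinAt (Zpath μ q0 p)
        (∫ z, gammaPath q0 p η z * ell q0 p z ∂μ) (Set.Icc 0 1) η)
    (hZ'' : ∀ η ∈ Set.Icc (0 : ℝ) 1,
      Integrable (fun z => gammaPath q0 p η z * ell q0 p z ^ 2) μ ∧
      HasDerivWithinAt (fun t => ∫ z, gammaPath q0 p t z * ell q0 p z ∂μ)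
        (∫ z, gammaPath q0 p η z * ell q0 p z ^ 2 ∂μ) (Set.Icc 0 1) η)
    (hZ'cont : ContinuousOn
      (fun η => ∫ z, gammaPath q0 p η z * ell q0 p z ∂μ) (Set.Icc 0 1))
    (hZ''cont : ContinuousOn
      (fun η => ∫ z, gammaPath q0 p η z * ell q0 p z ^ 2 ∂μ) (Set.Icc 0 1)) :
    Filter.Tendsto
      (fun K : ℕ => (K : ℝ) *
        ∑ k ∈ Finset.Icc 1 K,
          KLdiv μ (piPath μ q0 p (((k : ℝ) - 1) / K)) (piPath μ q0 p ((k : ℝ) / K)))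
      Filter.atTop
      (nhds (1 / 2 * KLdiv μ p q0 + 1 / 2 * KLdiv μ q0 p)) := by
  have hIcc0 : (0:ℝ) ∈ Set.Icc (0:ℝ) 1 := ⟨le_refl 0, zero_le_one⟩
  have hIcc1 : (1:ℝ) ∈ Set.Icc (0:ℝ) 1 := ⟨zero_le_one, le_refl 1⟩
  have hgood := good_ae μ q0 p hq0m hq0nn hq0one hpm hpnn hsupp
    (fun η hη => (hZ η hη).1) ((hZ' 0 hIcc0).2.continuousWithinAt)
  have hZpos : ∀ x ∈ Set.Icc (0:ℝ) 1, 0 < Zpath μ q0 p x := fun x hx => (hZ x hx).2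
  have hZcontOn : ContinuousOn (Zpath μ q0 p) (Set.Icc 0 1) :=
    fun x hx => ((hZ' x hx).2).continuousWithinAt
  have hfd : ∀ x ∈ Set.Icc (0:ℝ) 1,
      HasDerivWithinAt (fun η => Real.log (Zpath μ q0 p η))
      ((fun η => (∫ z, gammaPath q0 p η z * ell q0 p z ∂μ) / Zpath μ q0 p η) x)
      (Set.Icc 0 1) x := by
    intro x hx
    have := (Real.hasDerivAt_log (ne_of_gt (hZpos x hx))).comp_hasDerivWithinAt x (hZ' x hx).2
    simpa [div_eq_inv_mul, Function.comp_def] using this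
  have hgd : ∀ x ∈ Set.Icc (0:ℝ) 1,
      HasDerivWithinAt (fun η => (∫ z, gammaPath q0 p η z * ell q0 p z ∂μ) / Zpath μ q0 p η)
      ((fun η => ((∫ z, gammaPath q0 p η z * ell q0 p z ^ 2 ∂μ) * Zpath μ q0 p η
          - (∫ z, gammaPath q0 p η z * ell q0 p z ∂μ) * (∫ z, gammaPath q0 p η z * ell q0 p z ∂μ))
          / (Zpath μ q0 p η)^2) x)
      (Set.Icc 0 1) x :=
    fun x hx => (hZ'' x hx).2.div (hZ' x hx).2 (ne_of_gt (hZpos x hx))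
  have hgc : ContinuousOn
      (fun η => (∫ z, gammaPath q0 p η z * ell q0 p z ∂μ) / Zpath μ q0 p η) (Set.Icc 0 1) :=
    hZ'cont.div hZcontOn (fun x hx => ne_of_gt (hZpos x hx))
  have hhc : ContinuousOn
      (fun η => ((∫ z, gammaPath q0 p η z * ell q0 p z ^ 2 ∂μ) * Zpath μ q0 p η
          - (∫ z, gammaPath q0 p η z * ell q0 p z ∂μ) * (∫ z, gammaPath q0 p η z * ell q0 p z ∂μ))
          / (Zpath μ q0 p η)^2) (Set.Icc 0 1) :=
    ((hZ''cont.mul hZcontOn).sub (hZ'cont.mul hZ'cont)).div (hZcontOn.pow 2)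
      (fun x hx => pow_ne_zero 2 (ne_of_gt (hZpos x hx)))
  have main := sum_taylor_tendsto _ _ _ hfd hgd hgc hhc
  have hZ1 : Zpath μ q0 p 1 = 1 := by
    rw [Zpath, integral_congr_ae (gamma_one_ae μ q0 p hpnn hsupp)]
    exact hpone
  have hZ0 : Zpath μ q0 p 0 = 1 := by
    rw [Zpath, gamma_zero q0 p]
    exact hq0one
  have hg1 : (∫ z, gammaPath q0 p 1 z * ell q0 p z ∂μ) / Zpath μ q0 p 1 = KLdiv μ p q0 := by
    rw [hZ1, div_one,
      integral_congr_ae (show (fun z => gammaPath q0 p 1 z * ell q0 p z) =ᵐ[μ] fun z => p z * ell q0 p z from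
        (gamma_one_ae μ q0 p hpnn hsupp).mul (EventuallyEq.refl _ (ell q0 p)))]
    rfl
  have hg0 : (∫ z, gammaPath q0 p 0 z * ell q0 p z ∂μ) / Zpath μ q0 p 0
      = -KLdiv μ q0 p := by
    rw [hZ0, div_one, gamma_zero q0 p,
      show (fun z => q0 z * ell q0 p z) = fun z => -(q0 z * Real.log (q0 z / p z)) from
        funext fun z => by
          rw [ell, show Real.log (p z / q0 z) = -Real.log (q0 z / p z) from by
            rw [← Real.log_inv, inv_div]]
          ring,
      integral_neg]
    rfl
  have hval : ((fun η => (∫ z, gammaPath q0 p η z * ell q0 p z ∂μ) / Zpath μ q0 p η) 1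
      - (fun η => (∫ z, gammaPath q0 p η z * ell q0 p z ∂μ) / Zpath μ q0 p η) 0)/2
      = 1 / 2 * KLdiv μ p q0 + 1 / 2 * KLdiv μ q0 p := by
    simp only
    rw [hg1, hg0]
    ring
  rw [hval] at main
  refine main.congr' ?_
  filter_upwards [eventually_ge_atTop 1] with K hK
  have hK0 : (0:ℝ) < K := by exact_mod_cast hK
  have hKne : (K:ℝ) ≠ 0 := ne_of_gt hK0
  rw [← Finset.Ico_add_one_right_eq_Icc, Finset.sum_Ico_eq_sum_range, show K + 1 - 1 = K from rfl, Finset.mul_sum]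
  refine (Finset.sum_congr rfl fun i hi => ?_).symm
  have hiK : (i:ℝ) < K := by exact_mod_cast Finset.mem_range.mp hi
  have hiK' : (i:ℝ) + 1 ≤ K := by exact_mod_cast Finset.mem_range.mp hi
  have ha : (i:ℝ)/K ∈ Set.Icc (0:ℝ) 1 :=
    ⟨div_nonneg (Nat.cast_nonneg i) hK0.le, by rw [div_le_one hK0]; linarith⟩
  have hb : ((i:ℝ)+1)/K ∈ Set.Icc (0:ℝ) 1 :=
    ⟨div_nonneg (by positivity) hK0.le, by rw [div_le_one hK0]; linarith⟩
  have hcast1 : ((1+i : ℕ):ℝ) - 1 = (i:ℝ) := by push_cast; ring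
  have hcast2 : ((1+i : ℕ):ℝ) = (i:ℝ) + 1 := by push_cast; ring
  rw [hcast1, hcast2]
  rw [kl_identity μ q0 p hgood (hZpos _ ha) (hZpos _ hb) (hZ _ ha).1 (hZ' _ ha).1]
  have h2 : (K:ℝ) * ((i:ℝ)/K - ((i:ℝ)+1)/K) = -1 := by
    field_simp
    ring
  set G := (∫ z, gammaPath q0 p ((i:ℝ)/K) z * ell q0 p z ∂μ) / Zpath μ q0 p ((i:ℝ)/K) with hG
  set La := Real.log (Zpath μ q0 p ((i:ℝ)/K))
  set Lb := Real.log (Zpath μ q0 p (((i:ℝ)+1)/K))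
  calc (K:ℝ) * (((i:ℝ)/K - ((i:ℝ)+1)/K) * G + Lb - La)
      = ((K:ℝ) * ((i:ℝ)/K - ((i:ℝ)+1)/K)) * G + (K:ℝ) * (Lb - La) := by ring
    _ = (K:ℝ) * (Lb - La) - G := by rw [h2]; ring
end
end

section
/- Assume ∫ π_β (|ℓ| + |log q₀|) dμ < ∞ for every β ∈ [0,1], and assume η ↦ Z_η is three times continuously differentiable on [0,1] with derivatives given by differentiation under the integral sign, i.e., the j-th derivative of Z_η equals ∫ γ_η ℓ^j dμ for j = 1, 2, 3, each finite and continuous in η. Then there exists a constant C ≥ 0 such that for every integer K ≥ 1, with equally spaced temperatures β_k = k/K, | ∑_{k=1}^{K} D_KL(π_{(k−1)/K} ‖ π_{k/K}) − (1/(2K)) ( D_KL(p ‖ q₀) + D_KL(q₀ ‖ p) ) | ≤ C / K². -/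
open MeasureTheory Real Filter
open Topology

noncomputable section

variable {X : Type*} [MeasurableSpace X]

/-- Auxiliary: measurability of the annealing path. -/
lemma gammaPath_meas {q0 p : X → ℝ} (hq0m : Measurable q0) (hpm : Measurable p) (η : ℝ) :
    Measurable (gammaPath q0 p η) := by
  unfold gammaPath
  exact Measurable.ite (hq0m (measurableSet_singleton 0)) measurable_const (by fun_prop)

/-- Auxiliary: nonnegativity of the annealing path. -/
lemma gammaPath_nonneg {q0 p : X → ℝ} (hq0nn : ∀ z, 0 ≤ q0 z) (hpnn : ∀ z, 0 ≤ p z)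
    (η : ℝ) (z : X) : 0 ≤ gammaPath q0 p η z := by
  unfold gammaPath
  split
  · exact le_rfl
  · exact mul_nonneg (Real.rpow_nonneg (hq0nn z) _) (Real.rpow_nonneg (hpnn z) _)

/-- Auxiliary quantitative trapezoid rule estimate on a subinterval of `[0,1]`. -/
lemma trapezoid_est {F F' F'' : ℝ → ℝ} {M : ℝ}
    (hF : ∀ t ∈ Set.Icc (0:ℝ) 1, HasDerivWithinAt F (F' t) (Set.Icc 0 1) t)
    (hF'd : ∀ t ∈ Set.Icc (0:ℝ) 1, HasDerivWithinAt F' (F'' t) (Set.Icc 0 1) t)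
    (hM : ∀ t ∈ Set.Icc (0:ℝ) 1, |F'' t| ≤ M)
    {a b : ℝ} (ha : 0 ≤ a) (hab : a ≤ b) (hb : b ≤ 1) :
    |(b - a)/2 * (F a + F b) - ∫ t in a..b, F t| ≤ M * (b - a)^3 / 12 := by
  have hM0 : 0 ≤ M := le_trans (abs_nonneg _) (hM 0 ⟨le_refl _, zero_le_one⟩)
  have hsub : Set.Icc a b ⊆ Set.Icc 0 1 := Set.Icc_subset_Icc ha hb
  have haI : a ∈ Set.Icc (0:ℝ) 1 := ⟨ha, hab.trans hb⟩
  have hbI : b ∈ Set.Icc (0:ℝ) 1 := ⟨ha.trans hab, hb⟩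
  set m : ℝ := (a + b)/2 with hm
  have hmI : m ∈ Set.Icc (0:ℝ) 1 := ⟨by simp [hm]; linarith, by simp [hm]; linarith⟩
  have Fcont : ContinuousOn F (Set.Icc 0 1) := fun t ht => (hF t ht).continuousWithinAt
  have F'cont : ContinuousOn F' (Set.Icc 0 1) := fun t ht => (hF'd t ht).continuousWithinAt
  have hLip : ∀ t ∈ Set.Icc (0:ℝ) 1, |F' t - F' m| ≤ M * |t - m| := by
    intro t ht
    have := Convex.norm_image_sub_le_of_norm_hasDerivWithin_le hF'd
      (fun x hx => by rw [Real.norm_eq_abs]; exact hM x hx) (convex_Icc 0 1) hmI ht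
    simpa [Real.norm_eq_abs] using this
  have huIcc : Set.uIcc a b = Set.Icc a b := Set.uIcc_of_le hab
  have hFint : IntervalIntegrable F volume a b :=
    (Fcont.mono (huIcc ▸ hsub : Set.uIcc a b ⊆ Set.Icc 0 1)).intervalIntegrable
  have hcont2 : ContinuousOn (fun t => F' t * (t - m) + F t) (Set.uIcc a b) := by
    rw [huIcc]
    exact ((F'cont.mono hsub).mul (continuousOn_id.sub continuousOn_const)).add (Fcont.mono hsub)
  have hint2 : IntervalIntegrable (fun t => F' t * (t - m) + F t) volume a b :=
    hcont2.intervalIntegrable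
  have hint3 : IntervalIntegrable (fun t => F' t * (t - m)) volume a b := by
    apply ContinuousOn.intervalIntegrable
    rw [huIcc]
    exact (F'cont.mono hsub).mul (continuousOn_id.sub continuousOn_const)
  have hftc : ∫ t in a..b, (F' t * (t - m) + F t) = F b * (b - m) - F a * (a - m) := by
    apply intervalIntegral.integral_eq_sub_of_hasDerivAt_of_le hab
    · exact ((Fcont.mono hsub).mul (continuousOn_id.sub continuousOn_const))
    · intro t ht
      have htI : t ∈ Set.Icc (0:ℝ) 1 := hsub ⟨ht.1.le, ht.2.le⟩
      have h0 : 0 < t := lt_of_le_of_lt ha ht.1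
      have h1 : t < 1 := lt_of_lt_of_le ht.2 hb
      have hFt : HasDerivAt F (F' t) t := (hF t htI).hasDerivAt (Icc_mem_nhds h0 h1)
      have := hFt.mul ((hasDerivAt_id t).sub_const m)
      simp only [mul_one] at this
      exact this
    · exact hint2
  have hsplit : ∫ t in a..b, (F' t * (t - m) + F t)
      = (∫ t in a..b, F' t * (t - m)) + ∫ t in a..b, F t :=
    intervalIntegral.integral_add hint3 hFint
  have key : (b - a)/2 * (F a + F b) - ∫ t in a..b, F t = ∫ t in a..b, F' t * (t - m) := by
    have h1 : F b * (b - m) - F a * (a - m) = (b - a)/2 * (F a + F b) := by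
      rw [hm]; ring
    rw [hsplit, h1] at hftc
    linarith
  rw [key]
  have hcenter : ∫ t in a..b, F' t * (t - m) = ∫ t in a..b, (F' t - F' m) * (t - m) := by
    have e : ∫ t in a..b, (F' t - F' m) * (t - m)
        = (∫ t in a..b, F' t * (t - m)) - F' m * ∫ t in a..b, (t - m) := by
      have : ∀ t, (F' t - F' m) * (t - m) = F' t * (t - m) - F' m * (t - m) := fun t => by ring
      rw [intervalIntegral.integral_congr (g := fun t => F' t * (t - m) - F' m * (t - m))
        (fun t _ => this t)]
      rw [intervalIntegral.integral_sub hint3 (by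
        apply ContinuousOn.intervalIntegrable
        exact (continuousOn_const.mul (continuousOn_id.sub continuousOn_const)))]
      rw [intervalIntegral.integral_const_mul]
    have hzero : ∫ t in a..b, (t - m) = 0 := by
      rw [intervalIntegral.integral_comp_sub_right (fun u => u) m, integral_id]
      rw [hm]; ring
    rw [e, hzero, mul_zero, sub_zero]
  rw [hcenter]
  have hbound : |∫ t in a..b, (F' t - F' m) * (t - m)| ≤ |∫ t in a..b, M * (t - m)^2| := by
    have := intervalIntegral.norm_integral_le_abs_of_norm_le (μ := volume)
      (f := fun t => (F' t - F' m) * (t - m)) (g := fun t => M * (t - m)^2)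
      (a := a) (b := b) ?_ ?_
    · simpa [Real.norm_eq_abs] using this
    · filter_upwards [ae_restrict_mem measurableSet_uIoc] with t ht
      have htI : t ∈ Set.Icc (0:ℝ) 1 := by
        apply hsub
        have : Set.uIoc a b = Set.Ioc a b := Set.uIoc_of_le hab
        rw [this] at ht
        exact ⟨ht.1.le, ht.2⟩
      rw [Real.norm_eq_abs, abs_mul]
      calc |F' t - F' m| * |t - m| ≤ (M * |t - m|) * |t - m| :=
            mul_le_mul_of_nonneg_right (hLip t htI) (abs_nonneg _)
        _ = M * (t - m)^2 := by rw [mul_assoc, ← abs_mul, ← pow_two, abs_of_nonneg (sq_nonneg _)]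
    · apply ContinuousOn.intervalIntegrable
      exact continuousOn_const.mul ((continuousOn_id.sub continuousOn_const).pow 2)
  have hval : ∫ t in a..b, M * (t - m)^2 = M * (b - a)^3 / 12 := by
    rw [intervalIntegral.integral_const_mul]
    have : ∫ t in a..b, (t - m)^2 = ((b-m)^3 - (a-m)^3)/3 := by
      rw [intervalIntegral.integral_comp_sub_right (fun u => u^2) m, integral_pow]
      norm_num
    rw [this, hm]; ring
  calc |∫ t in a..b, (F' t - F' m) * (t - m)| ≤ |∫ t in a..b, M * (t - m)^2| := hbound
    _ = M * (b - a)^3 / 12 := by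
        have hba : (0:ℝ) ≤ b - a := by linarith
        rw [hval, abs_of_nonneg (by positivity)]

set_option maxHeartbeats 1000000

/-- With `Z_η` three times continuously differentiable (derivatives given by
differentiation under the integral sign), the AIS gap with equally spaced temperatures
`β_k = k/K` equals `(1/(2K))(D_KL(p‖q₀) + D_KL(q₀‖p))` up to an error bounded by `C/K²`. -/
theorem ais_gap_symmetrized_kl_quantitative
    (μ : Measure X) [SigmaFinite μ] (q0 p : X → ℝ)
    (hq0m : Measurable q0) (hq0nn : ∀ z, 0 ≤ q0 z) (hq0one : ∫ z, q0 z ∂μ = 1)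
    (hpm : Measurable p) (hpnn : ∀ z, 0 ≤ p z) (hpone : ∫ z, p z ∂μ = 1)
    (hsupp : ∀ᵐ z ∂μ, 0 < p z → 0 < q0 z)
    (hZ : ∀ η ∈ Set.Icc (0 : ℝ) 1,
      Integrable (gammaPath q0 p η) μ ∧ 0 < Zpath μ q0 p η)
    (hπint : ∀ β ∈ Set.Icc (0 : ℝ) 1,
      Integrable (fun z => piPath μ q0 p β z * (|ell q0 p z| + |Real.log (q0 z)|)) μ)
    (hZ' : ∀ η ∈ Set.Icc (0 : ℝ) 1,
      Integrable (fun z => gammaPath q0 p η z * ell q0 p z) μ ∧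
      HasDerivWithinAt (Zpath μ q0 p)
        (∫ z, gammaPath q0 p η z * ell q0 p z ∂μ) (Set.Icc 0 1) η)
    (hZ'' : ∀ η ∈ Set.Icc (0 : ℝ) 1,
      Integrable (fun z => gammaPath q0 p η z * ell q0 p z ^ 2) μ ∧
      HasDerivWithinAt (fun t => ∫ z, gammaPath q0 p t z * ell q0 p z ∂μ)
        (∫ z, gammaPath q0 p η z * ell q0 p z ^ 2 ∂μ) (Set.Icc 0 1) η)
    (hZ''' : ∀ η ∈ Set.Icc (0 : ℝ) 1,
      Integrable (fun z => gammaPath q0 p η z * ell q0 p z ^ 3) μ ∧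
      HasDerivWithinAt (fun t => ∫ z, gammaPath q0 p t z * ell q0 p z ^ 2 ∂μ)
        (∫ z, gammaPath q0 p η z * ell q0 p z ^ 3 ∂μ) (Set.Icc 0 1) η)
    (hZ'cont : ContinuousOn
      (fun η => ∫ z, gammaPath q0 p η z * ell q0 p z ∂μ) (Set.Icc 0 1))
    (hZ''cont : ContinuousOn
      (fun η => ∫ z, gammaPath q0 p η z * ell q0 p z ^ 2 ∂μ) (Set.Icc 0 1))
    (hZ'''cont : ContinuousOn
      (fun η => ∫ z, gammaPath q0 p η z * ell q0 p z ^ 3 ∂μ) (Set.Icc 0 1)) :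
    ∃ C : ℝ, 0 ≤ C ∧ ∀ K : ℕ, 1 ≤ K →
      |(∑ k ∈ Finset.Icc 1 K,
          KLdiv μ (piPath μ q0 p (((k : ℝ) - 1) / K)) (piPath μ q0 p ((k : ℝ) / K)))
        - 1 / (2 * (K : ℝ)) * (KLdiv μ p q0 + KLdiv μ q0 p)| ≤ C / (K : ℝ) ^ 2 := by
    classical
  have mem0 : (0:ℝ) ∈ Set.Icc (0:ℝ) 1 := ⟨le_refl 0, zero_le_one⟩
  have mem1 : (1:ℝ) ∈ Set.Icc (0:ℝ) 1 := ⟨zero_le_one, le_refl 1⟩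
  have hγm : ∀ η : ℝ, Measurable (gammaPath q0 p η) := gammaPath_meas hq0m hpm
  have hγnn : ∀ (η : ℝ) (z : X), 0 ≤ gammaPath q0 p η z := gammaPath_nonneg hq0nn hpnn
  -- γ₀ = q₀
  have hγ0 : gammaPath q0 p 0 = q0 := by
    funext z
    unfold gammaPath
    by_cases hq : q0 z = 0
    · rw [if_pos hq, hq]
    · rw [if_neg hq]
      norm_num
  have hq0int : Integrable q0 μ := hγ0 ▸ (hZ 0 mem0).1
  have hZ0 : Zpath μ q0 p 0 = 1 := by
    unfold Zpath
    rw [hγ0]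
    exact hq0one
  -- γ₁ = p a.e.
  have hγ1 : ∀ᵐ z ∂μ, gammaPath q0 p 1 z = p z := by
    filter_upwards [hsupp] with z hz
    unfold gammaPath
    by_cases hq : q0 z = 0
    · rw [if_pos hq]
      rcases eq_or_lt_of_le (hpnn z) with h | h
      · exact h
      · exact absurd (hz h).ne' (by rw [hq]; simp)
    · rw [if_neg hq]
      norm_num [Real.rpow_one]
  have hpint : Integrable p μ := (hZ 1 mem1).1.congr hγ1
  have hZ1 : Zpath μ q0 p 1 = 1 := by
    unfold Zpath
    rw [integral_congr_ae hγ1]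
    exact hpone
  -- Step 0 : a.e., p z = 0 → q0 z = 0
  have hseq : Tendsto (fun n : ℕ => 1/((n:ℝ)+1)) atTop (𝓝 0) :=
    tendsto_one_div_add_atTop_nhds_zero_nat
  have hseqI : ∀ n : ℕ, 1/((n:ℝ)+1) ∈ Set.Icc (0:ℝ) 1 := by
    intro n
    constructor
    · positivity
    · rw [div_le_one (by positivity)]
      linarith [show (0:ℝ) ≤ (n:ℝ) from Nat.cast_nonneg n]
  have hpq0 : ∀ᵐ z ∂μ, p z = 0 → q0 z = 0 := by
    set f : X → ℝ := fun z => if p z = 0 then 0 else q0 z with hfdef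
    have hfm : Measurable f :=
      Measurable.ite (hpm (measurableSet_singleton 0)) measurable_const hq0m
    have hfle : ∀ z, f z ≤ q0 z := by
      intro z
      rw [hfdef]
      dsimp only
      split
      · exact hq0nn z
      · exact le_rfl
    have hfnn : ∀ z, 0 ≤ f z := by
      intro z
      rw [hfdef]
      dsimp only
      split
      · exact le_rfl
      · exact hq0nn z
    have hfint : Integrable f μ := by
      refine hq0int.mono' hfm.aestronglyMeasurable ?_
      refine Filter.Eventually.of_forall fun z => ?_
      rw [Real.norm_eq_abs, abs_of_nonneg (hfnn z)]
      exact hfle z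
    have hZt : Tendsto (fun n : ℕ => Zpath μ q0 p (1/((n:ℝ)+1))) atTop (𝓝 1) := by
      have hcw : ContinuousWithinAt (Zpath μ q0 p) (Set.Icc 0 1) 0 :=
        ((hZ' 0 mem0).2).continuousWithinAt
      have hseq' : Tendsto (fun n : ℕ => 1/((n:ℝ)+1)) atTop (𝓝[Set.Icc (0:ℝ) 1] 0) :=
        tendsto_nhdsWithin_of_tendsto_nhds_of_eventually_within _ hseq
          (Filter.Eventually.of_forall hseqI)
      have := hcw.tendsto.comp hseq'
      rwa [hZ0] at this
    have hft : Tendsto (fun n : ℕ => Zpath μ q0 p (1/((n:ℝ)+1))) atTop (𝓝 (∫ z, f z ∂μ)) := by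
      apply tendsto_integral_of_dominated_convergence (fun z => q0 z + p z)
      · exact fun n => (hγm _).aestronglyMeasurable
      · exact hq0int.add hpint
      · intro n
        refine Filter.Eventually.of_forall fun z => ?_
        rw [Real.norm_eq_abs, abs_of_nonneg (hγnn _ _)]
        unfold gammaPath
        split
        · have := hq0nn z; have := hpnn z; linarith
        · calc q0 z ^ (1 - 1/((n:ℝ)+1)) * p z ^ (1/((n:ℝ)+1))
              ≤ (1 - 1/((n:ℝ)+1)) * q0 z + (1/((n:ℝ)+1)) * p z :=
                Real.geom_mean_le_arith_mean2_weighted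
                  (by linarith [(hseqI n).2]) (hseqI n).1 (hq0nn z) (hpnn z) (by ring)
            _ ≤ q0 z + p z := by
                nlinarith [hq0nn z, hpnn z, (hseqI n).1, (hseqI n).2]
      · refine Filter.Eventually.of_forall fun z => ?_
        by_cases hq : q0 z = 0
        · have hz : ∀ n : ℕ, gammaPath q0 p (1/((n:ℝ)+1)) z = 0 := fun n => if_pos hq
          have hf0 : f z = 0 := by
            rw [hfdef]
            dsimp only
            split
            · rfl
            · exact hq
          rw [hf0]
          simpa only [hz] using (tendsto_const_nhds : Tendsto (fun _ : ℕ => (0:ℝ)) atTop (𝓝 0))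
        · by_cases hp : p z = 0
          · have hz : ∀ n : ℕ, gammaPath q0 p (1/((n:ℝ)+1)) z = 0 := by
              intro n
              unfold gammaPath
              rw [if_neg hq, hp, Real.zero_rpow (by positivity), mul_zero]
            have hf0 : f z = 0 := if_pos hp
            rw [hf0]
            simpa only [hz] using (tendsto_const_nhds : Tendsto (fun _ : ℕ => (0:ℝ)) atTop (𝓝 0))
          · have hq' : 0 < q0 z := lt_of_le_of_ne (hq0nn z) (Ne.symm hq)
            have hp' : 0 < p z := lt_of_le_of_ne (hpnn z) (Ne.symm hp)
            have hf0 : f z = q0 z := if_neg hp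
            rw [hf0]
            have h1 : Tendsto (fun n : ℕ => q0 z ^ (1 - 1/((n:ℝ)+1))) atTop
                (𝓝 (q0 z ^ (1:ℝ))) := by
              have hc : ContinuousAt (fun y : ℝ => q0 z ^ y) 1 :=
                Real.continuousAt_const_rpow hq
              exact hc.tendsto.comp (by simpa using tendsto_const_nhds.sub hseq)
            have h2 : Tendsto (fun n : ℕ => p z ^ (1/((n:ℝ)+1))) atTop
                (𝓝 (p z ^ (0:ℝ))) :=
              (Real.continuousAt_const_rpow hp).tendsto.comp hseq
            have h3 := h1.mul h2
            rw [Real.rpow_one, Real.rpow_zero, mul_one] at h3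
            have heq : ∀ n : ℕ, gammaPath q0 p (1/((n:ℝ)+1)) z
                = q0 z ^ (1 - 1/((n:ℝ)+1)) * p z ^ (1/((n:ℝ)+1)) := fun n => if_neg hq
            simpa only [heq] using h3
    have hfeq : ∫ z, f z ∂μ = 1 := tendsto_nhds_unique hft hZt
    have hdiff : ∫ z, (q0 z - f z) ∂μ = 0 := by
      rw [integral_sub hq0int hfint, hq0one, hfeq, sub_self]
    have hae : (fun z => q0 z - f z) =ᵐ[μ] 0 :=
      (integral_eq_zero_iff_of_nonneg
        (fun z => by simpa [sub_nonneg] using hfle z)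
        (hq0int.sub hfint)).mp hdiff
    filter_upwards [hae] with z hz hp0
    have hf0 : f z = 0 := if_pos hp0
    have : q0 z - f z = 0 := hz
    rw [hf0, sub_zero] at this
    exact this
  -- good set
  have hgood : ∀ᵐ z ∂μ, q0 z = 0 ∨ (0 < q0 z ∧ 0 < p z) := by
    filter_upwards [hpq0] with z h1
    by_cases hq : q0 z = 0
    · exact Or.inl hq
    · have hq' : 0 < q0 z := lt_of_le_of_ne (hq0nn z) (Ne.symm hq)
      right
      refine ⟨hq', ?_⟩
      rcases eq_or_lt_of_le (hpnn z) with h | h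
      · exact absurd (h1 h.symm) hq
      · exact h
  -- integrability of π_a ℓ
  have hellm : Measurable (ell q0 p) := by
    unfold ell
    exact Real.measurable_log.comp (hpm.div hq0m)
  have hπℓint : ∀ a ∈ Set.Icc (0:ℝ) 1,
      Integrable (fun z => piPath μ q0 p a z * ell q0 p z) μ := by
    intro a ha
    refine (hπint a ha).mono' ?_ ?_
    · exact (((hγm a).div_const _).mul hellm).aestronglyMeasurable
    · refine Filter.Eventually.of_forall fun z => ?_
      have hπnn : 0 ≤ piPath μ q0 p a z := div_nonneg (hγnn a z) (hZ a ha).2.le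
      rw [Real.norm_eq_abs, abs_mul, abs_of_nonneg hπnn]
      exact mul_le_mul_of_nonneg_left (le_add_of_nonneg_right (abs_nonneg _)) hπnn
  have hπaint : ∀ a ∈ Set.Icc (0:ℝ) 1, Integrable (piPath μ q0 p a) μ := fun a ha =>
    ((hZ a ha).1.div_const _ : Integrable (fun z => gammaPath q0 p a z / Zpath μ q0 p a) μ)
  -- ∫ π_a = 1
  have hπone : ∀ a ∈ Set.Icc (0:ℝ) 1, ∫ z, piPath μ q0 p a z ∂μ = 1 := by
    intro a ha
    have : ∫ z, piPath μ q0 p a z ∂μ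
        = (∫ z, gammaPath q0 p a z ∂μ) / Zpath μ q0 p a := by
      rw [← MeasureTheory.integral_div]
      rfl
    rw [this]
    exact div_self (hZ a ha).2.ne'
  -- ∫ π_a ℓ = g1 a / Z a
  have hπℓeq : ∀ a ∈ Set.Icc (0:ℝ) 1,
      ∫ z, piPath μ q0 p a z * ell q0 p z ∂μ
        = (∫ z, gammaPath q0 p a z * ell q0 p z ∂μ) / Zpath μ q0 p a := by
    intro a ha
    rw [← MeasureTheory.integral_div]
    congr 1
    funext z
    show piPath μ q0 p a z * ell q0 p z = _
    show gammaPath q0 p a z / Zpath μ q0 p a * ell q0 p z = _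
    rw [div_mul_eq_mul_div]
  -- Step 1: the KL identity along the path
  have step1 : ∀ a ∈ Set.Icc (0:ℝ) 1, ∀ b ∈ Set.Icc (0:ℝ) 1,
      KLdiv μ (piPath μ q0 p a) (piPath μ q0 p b)
        = (a - b) * ((∫ z, gammaPath q0 p a z * ell q0 p z ∂μ) / Zpath μ q0 p a)
          + (Real.log (Zpath μ q0 p b) - Real.log (Zpath μ q0 p a)) := by
    intro a ha b hb
    have hZa := (hZ a ha).2
    have hZb := (hZ b hb).2
    have key : (fun z => piPath μ q0 p a z * Real.log (piPath μ q0 p a z / piPath μ q0 p b z))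
        =ᵐ[μ] (fun z => (a - b) * (piPath μ q0 p a z * ell q0 p z)
            + (Real.log (Zpath μ q0 p b) - Real.log (Zpath μ q0 p a)) * piPath μ q0 p a z) := by
      filter_upwards [hgood] with z hz
      rcases hz with hq | ⟨hq, hp⟩
      · simp [piPath, gammaPath, hq]
      · have hγa : gammaPath q0 p a z = q0 z ^ (1-a) * p z ^ a := if_neg hq.ne'
        have hγb : gammaPath q0 p b z = q0 z ^ (1-b) * p z ^ b := if_neg hq.ne'
        have hγap : 0 < gammaPath q0 p a z := by
          rw [hγa]
          exact mul_pos (Real.rpow_pos_of_pos hq _) (Real.rpow_pos_of_pos hp _)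
        have hγbp : 0 < gammaPath q0 p b z := by
          rw [hγb]
          exact mul_pos (Real.rpow_pos_of_pos hq _) (Real.rpow_pos_of_pos hp _)
        have hπaeq : piPath μ q0 p a z = gammaPath q0 p a z / Zpath μ q0 p a := rfl
        have hπbeq : piPath μ q0 p b z = gammaPath q0 p b z / Zpath μ q0 p b := rfl
        have hπap : 0 < piPath μ q0 p a z := by rw [hπaeq]; exact div_pos hγap hZa
        have hπbp : 0 < piPath μ q0 p b z := by rw [hπbeq]; exact div_pos hγbp hZb
        have hlog : Real.log (piPath μ q0 p a z / piPath μ q0 p b z)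
            = (a - b) * ell q0 p z
              + (Real.log (Zpath μ q0 p b) - Real.log (Zpath μ q0 p a)) := by
          rw [Real.log_div hπap.ne' hπbp.ne', hπaeq, hπbeq,
            Real.log_div hγap.ne' hZa.ne', Real.log_div hγbp.ne' hZb.ne',
            hγa, hγb,
            Real.log_mul (Real.rpow_pos_of_pos hq _).ne' (Real.rpow_pos_of_pos hp _).ne',
            Real.log_mul (Real.rpow_pos_of_pos hq _).ne' (Real.rpow_pos_of_pos hp _).ne',
            Real.log_rpow hq, Real.log_rpow hq, Real.log_rpow hp, Real.log_rpow hp]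
          show _ = (a - b) * Real.log (p z / q0 z) + _
          rw [Real.log_div hp.ne' hq.ne']
          ring
        rw [hlog]
        ring
    show (∫ z, piPath μ q0 p a z * Real.log (piPath μ q0 p a z / piPath μ q0 p b z) ∂μ) = _
    rw [integral_congr_ae key,
      integral_add ((hπℓint a ha).const_mul _) ((hπaint a ha).const_mul _),
      integral_const_mul, integral_const_mul, hπℓeq a ha, hπone a ha]
    ring
  -- endpoint KL identities
  have hKLp : KLdiv μ p q0 = ∫ z, gammaPath q0 p 1 z * ell q0 p z ∂μ := by
    show (∫ z, p z * Real.log (p z / q0 z) ∂μ) = _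
    apply integral_congr_ae
    filter_upwards [hγ1] with z hz
    show p z * ell q0 p z = gammaPath q0 p 1 z * ell q0 p z
    rw [hz]
  have hKLq : KLdiv μ q0 p = -∫ z, gammaPath q0 p 0 z * ell q0 p z ∂μ := by
    show (∫ z, q0 z * Real.log (q0 z / p z) ∂μ) = _
    rw [← MeasureTheory.integral_neg]
    apply integral_congr_ae
    filter_upwards [hgood] with z hz
    rcases hz with hq | ⟨hq, hp⟩
    · simp [gammaPath, hq]
    · have hγ0z : gammaPath q0 p 0 z = q0 z := by rw [hγ0]
      rw [hγ0z]
      unfold ell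
      rw [Real.log_div hq.ne' hp.ne', Real.log_div hp.ne' hq.ne']
      ring
  -- the function F = L' and its derivatives
  set F : ℝ → ℝ := fun t =>
    (∫ z, gammaPath q0 p t z * ell q0 p z ∂μ) / Zpath μ q0 p t with hFdef
  set F' : ℝ → ℝ := fun t =>
    ((∫ z, gammaPath q0 p t z * ell q0 p z ^ 2 ∂μ) * Zpath μ q0 p t
      - (∫ z, gammaPath q0 p t z * ell q0 p z ∂μ) * (∫ z, gammaPath q0 p t z * ell q0 p z ∂μ))
      / Zpath μ q0 p t ^ 2 with hF'def
  have hFd : ∀ t ∈ Set.Icc (0:ℝ) 1, HasDerivWithinAt F (F' t) (Set.Icc 0 1) t := by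
    intro t ht
    exact ((hZ'' t ht).2).div ((hZ' t ht).2) (hZ t ht).2.ne'
  set F'' : ℝ → ℝ := fun t =>
    (((∫ z, gammaPath q0 p t z * ell q0 p z ^ 3 ∂μ) * Zpath μ q0 p t
        + (∫ z, gammaPath q0 p t z * ell q0 p z ^ 2 ∂μ) * (∫ z, gammaPath q0 p t z * ell q0 p z ∂μ)
        - ((∫ z, gammaPath q0 p t z * ell q0 p z ^ 2 ∂μ) * (∫ z, gammaPath q0 p t z * ell q0 p z ∂μ)
            + (∫ z, gammaPath q0 p t z * ell q0 p z ∂μ) * (∫ z, gammaPath q0 p t z * ell q0 p z ^ 2 ∂μ)))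
        * Zpath μ q0 p t ^ 2
      - ((∫ z, gammaPath q0 p t z * ell q0 p z ^ 2 ∂μ) * Zpath μ q0 p t
          - (∫ z, gammaPath q0 p t z * ell q0 p z ∂μ) * (∫ z, gammaPath q0 p t z * ell q0 p z ∂μ))
        * (2 * Zpath μ q0 p t * (∫ z, gammaPath q0 p t z * ell q0 p z ∂μ)))
      / (Zpath μ q0 p t ^ 2) ^ 2 with hF''def
  have hF'd : ∀ t ∈ Set.Icc (0:ℝ) 1, HasDerivWithinAt F' (F'' t) (Set.Icc 0 1) t := by
    intro t ht
    have h := HasDerivWithinAt.div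
      (((hZ''' t ht).2.mul (hZ' t ht).2).sub ((hZ'' t ht).2.mul (hZ'' t ht).2))
      ((hZ' t ht).2.pow 2)
      (pow_ne_zero 2 (hZ t ht).2.ne')
    refine h.congr_deriv ?_
    simp only [hF''def, Pi.mul_apply, Pi.sub_apply, Pi.pow_apply]
    push_cast
    ring
  have hFap : ∀ t : ℝ, F t
      = (∫ z, gammaPath q0 p t z * ell q0 p z ∂μ) / Zpath μ q0 p t := fun t => by
    simp only [hFdef]
  have Zcont : ContinuousOn (Zpath μ q0 p) (Set.Icc 0 1) := fun t ht =>
    ((hZ' t ht).2).continuousWithinAt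
  have F''cont : ContinuousOn F'' (Set.Icc 0 1) := by
    rw [hF''def]
    apply ContinuousOn.div
    · exact ((((hZ'''cont.mul Zcont).add (hZ''cont.mul hZ'cont)).sub
        ((hZ''cont.mul hZ'cont).add (hZ'cont.mul hZ''cont))).mul (Zcont.pow 2)).sub
        (((hZ''cont.mul Zcont).sub (hZ'cont.mul hZ'cont)).mul
          ((continuousOn_const.mul Zcont).mul hZ'cont))
    · exact (Zcont.pow 2).pow 2
    · intro t ht
      exact pow_ne_zero 2 (pow_ne_zero 2 (hZ t ht).2.ne')
  obtain ⟨M, hM⟩ := isCompact_Icc.exists_bound_of_continuousOn F''cont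
  have hMabs : ∀ t ∈ Set.Icc (0:ℝ) 1, |F'' t| ≤ M := by
    intro t ht
    have := hM t ht
    rwa [Real.norm_eq_abs] at this
  have hM0 : 0 ≤ M := le_trans (abs_nonneg _) (hMabs 0 mem0)
  have Fcont : ContinuousOn F (Set.Icc 0 1) := fun t ht => (hFd t ht).continuousWithinAt
  have hI01 : ∫ t in (0:ℝ)..1, F t = 0 := by
    have hLd : ∀ t ∈ Set.Icc (0:ℝ) 1,
        HasDerivWithinAt (fun s => Real.log (Zpath μ q0 p s)) (F t) (Set.Icc 0 1) t := by
      intro t ht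
      have h := ((hZ' t ht).2).log (hZ t ht).2.ne'
      rw [hFap t]
      exact h
    have hFii : IntervalIntegrable F volume 0 1 := by
      apply ContinuousOn.intervalIntegrable
      rw [Set.uIcc_of_le (zero_le_one : (0:ℝ) ≤ 1)]
      exact Fcont
    rw [intervalIntegral.integral_eq_sub_of_hasDerivAt_of_le zero_le_one
      (fun t ht => (hLd t ht).continuousWithinAt)
      (fun t ht => (hLd t ⟨ht.1.le, ht.2.le⟩).hasDerivAt (Icc_mem_nhds ht.1 ht.2))
      hFii]
    rw [hZ0, hZ1, Real.log_one, sub_self]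
  refine ⟨M/12, by linarith, ?_⟩
  intro K hK
  have hK0 : (0:ℝ) < (K:ℝ) := by
    have : 0 < K := hK
    exact_mod_cast this
  set a : ℕ → ℝ := fun j => (j:ℝ)/(K:ℝ) with hadef
  have ha0 : a 0 = 0 := by simp [hadef]
  have haK : a K = 1 := by
    simp only [hadef]
    exact div_self hK0.ne'
  have hamem : ∀ j : ℕ, j ≤ K → a j ∈ Set.Icc (0:ℝ) 1 := by
    intro j hj
    simp only [hadef]
    constructor
    · positivity
    · rw [div_le_one hK0]
      exact_mod_cast hj
  have hastep : ∀ j : ℕ, a (j+1) - a j = 1/(K:ℝ) := by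
    intro j
    simp only [hadef]
    push_cast
    field_simp
    ring
  have hamono : ∀ j : ℕ, a j ≤ a (j+1) := by
    intro j
    have h1 : (0:ℝ) < 1/(K:ℝ) := by positivity
    have := hastep j
    linarith
  have hsum1 : (∑ k ∈ Finset.Icc 1 K,
      KLdiv μ (piPath μ q0 p (((k:ℝ)-1)/(K:ℝ))) (piPath μ q0 p ((k:ℝ)/(K:ℝ))))
      = ∑ j ∈ Finset.range K,
          KLdiv μ (piPath μ q0 p (a j)) (piPath μ q0 p (a (j+1))) := by
    rw [← Finset.Ico_add_one_right_eq_Icc, Finset.sum_Ico_eq_sum_range]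
    apply Finset.sum_congr
    · norm_num
    intro j hj
    have e1 : (((1+j : ℕ):ℝ)-1)/(K:ℝ) = a j := by
      simp only [hadef]
      push_cast
      ring
    have e2 : (((1+j : ℕ):ℝ))/(K:ℝ) = a (j+1) := by
      simp only [hadef]
      push_cast
      ring
    rw [e1, e2]
  have hsum2 : (∑ j ∈ Finset.range K,
        KLdiv μ (piPath μ q0 p (a j)) (piPath μ q0 p (a (j+1))))
      = -(1/(K:ℝ)) * ∑ j ∈ Finset.range K, F (a j) := by
    have hterm : ∀ j ∈ Finset.range K,
        KLdiv μ (piPath μ q0 p (a j)) (piPath μ q0 p (a (j+1)))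
          = -(1/(K:ℝ)) * F (a j)
            + (Real.log (Zpath μ q0 p (a (j+1))) - Real.log (Zpath μ q0 p (a j))) := by
      intro j hj
      have hj' : j < K := Finset.mem_range.mp hj
      have h1 := step1 (a j) (hamem j hj'.le) (a (j+1)) (hamem (j+1) hj')
      rw [h1]
      have e3 : a j - a (j+1) = -(1/(K:ℝ)) := by
        have := hastep j
        linarith
      rw [e3, hFap (a j)]
    rw [Finset.sum_congr rfl hterm, Finset.sum_add_distrib,
      Finset.sum_range_sub (fun j => Real.log (Zpath μ q0 p (a j))),
      ha0, haK, hZ0, hZ1, Real.log_one, sub_self, add_zero, ← Finset.mul_sum]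
  have hKLsum : KLdiv μ p q0 + KLdiv μ q0 p = F 1 - F 0 := by
    rw [hKLp, hKLq, hFap 1, hFap 0, hZ0, hZ1, div_one, div_one]
    ring
  have htrap : ∀ j ∈ Finset.range K,
      |1/(2*(K:ℝ)) * (F (a j) + F (a (j+1))) - ∫ t in (a j)..(a (j+1)), F t|
        ≤ M/12 * (1/(K:ℝ))^3 := by
    intro j hj
    have hj' : j < K := Finset.mem_range.mp hj
    have h := trapezoid_est hFd hF'd hMabs (hamem j hj'.le).1 (hamono j) (hamem (j+1) hj').2
    rw [hastep j] at h
    have e1 : (1/(K:ℝ))/2 = 1/(2*(K:ℝ)) := by ring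
    have e2 : M * (1/(K:ℝ))^3/12 = M/12 * (1/(K:ℝ))^3 := by ring
    rw [e1, e2] at h
    exact h
  have hintsum : ∑ j ∈ Finset.range K, (∫ t in (a j)..(a (j+1)), F t) = 0 := by
    rw [intervalIntegral.sum_integral_adjacent_intervals (fun k hk => by
      apply ContinuousOn.intervalIntegrable
      apply Fcont.mono
      rw [Set.uIcc_of_le (hamono k)]
      exact Set.Icc_subset_Icc (hamem k hk.le).1 (hamem (k+1) hk).2)]
    rw [ha0, haK]
    exact hI01
  have hshift : ∑ j ∈ Finset.range K, F (a (j+1))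
      = (∑ j ∈ Finset.range K, F (a j)) + F 1 - F 0 := by
    have h1 := Finset.sum_range_succ (fun j => F (a j)) K
    have h2 := Finset.sum_range_succ' (fun j => F (a j)) K
    rw [h1] at h2
    rw [ha0, haK] at h2
    linarith
  have hTdef : ∑ j ∈ Finset.range K,
      (1/(2*(K:ℝ)) * (F (a j) + F (a (j+1))) - ∫ t in (a j)..(a (j+1)), F t)
      = 1/(K:ℝ) * (∑ j ∈ Finset.range K, F (a j)) + 1/(2*(K:ℝ)) * (F 1 - F 0) := by
    rw [Finset.sum_sub_distrib, hintsum, sub_zero]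
    have e4 : ∑ j ∈ Finset.range K, 1/(2*(K:ℝ)) * (F (a j) + F (a (j+1)))
        = 1/(2*(K:ℝ)) * ((∑ j ∈ Finset.range K, F (a j))
            + ∑ j ∈ Finset.range K, F (a (j+1))) := by
      rw [← Finset.mul_sum, Finset.sum_add_distrib]
    rw [e4, hshift]
    ring
  have habs : |∑ j ∈ Finset.range K,
      (1/(2*(K:ℝ)) * (F (a j) + F (a (j+1))) - ∫ t in (a j)..(a (j+1)), F t)|
      ≤ M/12 / (K:ℝ)^2 := by
    calc |∑ j ∈ Finset.range K,
        (1/(2*(K:ℝ)) * (F (a j) + F (a (j+1))) - ∫ t in (a j)..(a (j+1)), F t)|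
        ≤ ∑ j ∈ Finset.range K,
            |1/(2*(K:ℝ)) * (F (a j) + F (a (j+1))) - ∫ t in (a j)..(a (j+1)), F t| :=
          Finset.abs_sum_le_sum_abs _ _
      _ ≤ ∑ _j ∈ Finset.range K, M/12 * (1/(K:ℝ))^3 := Finset.sum_le_sum htrap
      _ = (K:ℝ) * (M/12 * (1/(K:ℝ))^3) := by
          rw [Finset.sum_const, Finset.card_range, nsmul_eq_mul]
      _ = M/12 / (K:ℝ)^2 := by
          field_simp
  rw [hsum1, hsum2, hKLsum]
  have hfin : -(1/(K:ℝ)) * (∑ j ∈ Finset.range K, F (a j)) - 1/(2*(K:ℝ)) * (F 1 - F 0)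
      = -∑ j ∈ Finset.range K,
          (1/(2*(K:ℝ)) * (F (a j) + F (a (j+1))) - ∫ t in (a j)..(a (j+1)), F t) := by
    rw [hTdef]
    ring
  rw [hfin, abs_neg]
  exact habs
end
end

section
/- Fix β ∈ [0,1] and suppose ∫ π_β |ℓ| dμ < ∞, ∫ π_β |log q₀| dμ < ∞, and L is differentiable at β with L′(β) = ∫ π_β ℓ dμ. Then the cross-entropy h_β(η) := −∫ π_β log π_η dμ is differentiable at η = β with h_β′(β) = 0; i.e., the first-order term in the Taylor expansion of η ↦ h_β(η) around η = β vanishes. -/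
open MeasureTheory Real Filter

noncomputable section

variable {X : Type*} [MeasurableSpace X]

namespace CEAux

open Topology

set_option linter.unusedSectionVars false

lemma gamma_nonneg (q0 p : X → ℝ) (hq0 : ∀ z, 0 ≤ q0 z) (hp : ∀ z, 0 ≤ p z) (η : ℝ) (z : X) :
    0 ≤ gammaPath q0 p η z := by
  unfold gammaPath
  split
  · exact le_rfl
  · exact mul_nonneg (Real.rpow_nonneg (hq0 z) _) (Real.rpow_nonneg (hp z) _)

lemma gamma_meas (q0 p : X → ℝ) (hq0m : Measurable q0) (hpm : Measurable p) (η : ℝ) :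
    Measurable (gammaPath q0 p η) := by
  unfold gammaPath
  exact Measurable.ite (hq0m (measurableSet_singleton 0)) measurable_const
    ((hq0m.pow measurable_const).mul (hpm.pow measurable_const))

lemma gamma_eq_of_pos (q0 p : X → ℝ) (hp : ∀ z, 0 ≤ p z) {z : X} (hq : 0 < q0 z) (η : ℝ) :
    gammaPath q0 p η z = q0 z * (p z / q0 z) ^ η := by
  rw [gammaPath, if_neg hq.ne', Real.rpow_sub hq, Real.rpow_one,
    Real.div_rpow (hp z) hq.le]
  ring

lemma gamma_zero (q0 p : X → ℝ) (z : X) : gammaPath q0 p 0 z = q0 z := by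
  rw [gammaPath]
  split
  next h => exact h.symm
  next h => rw [sub_zero, Real.rpow_one, Real.rpow_zero, mul_one]

lemma gamma_congr_self (q0 p : X → ℝ) (hq0 : ∀ z, 0 ≤ q0 z) {z : X} (hpq : q0 z = p z)
    (η : ℝ) : gammaPath q0 p η z = q0 z := by
  rw [gammaPath]
  split
  next h => exact h.symm
  next h =>
    have hq : 0 < q0 z := (hq0 z).lt_of_ne (Ne.symm h)
    rw [← hpq, ← Real.rpow_add hq, sub_add_cancel, Real.rpow_one]

lemma rpow_le_max {r : ℝ} (hr : 0 < r) {a b c : ℝ} (hab : a ≤ b) (hbc : b ≤ c) :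
    r ^ b ≤ r ^ a + r ^ c := by
  rcases le_or_gt 0 (Real.log r) with h | h
  · have h1 : r ^ b ≤ r ^ c := by
      rw [Real.rpow_def_of_pos hr, Real.rpow_def_of_pos hr]
      exact Real.exp_le_exp.mpr (by nlinarith)
    have h2 : 0 ≤ r ^ a := Real.rpow_nonneg hr.le _
    linarith
  · have h1 : r ^ b ≤ r ^ a := by
      rw [Real.rpow_def_of_pos hr, Real.rpow_def_of_pos hr]
      exact Real.exp_le_exp.mpr (by nlinarith)
    have h2 : 0 ≤ r ^ c := Real.rpow_nonneg hr.le _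
    linarith

lemma gamma_le_add (q0 p : X → ℝ) (hq0 : ∀ z, 0 ≤ q0 z) (hp : ∀ z, 0 ≤ p z)
    {η₁ η η₂ : ℝ} (h1 : η₁ ≤ η) (h2 : η ≤ η₂) (hne : η ≠ 0) (z : X) :
    gammaPath q0 p η z ≤ gammaPath q0 p η₁ z + gammaPath q0 p η₂ z := by
  have hnn := add_nonneg (gamma_nonneg q0 p hq0 hp η₁ z) (gamma_nonneg q0 p hq0 hp η₂ z)
  rcases (hq0 z).eq_or_lt with hq | hq
  · rw [gammaPath, if_pos hq.symm]; exact hnn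
  rcases (hp z).eq_or_lt with hpz | hpz
  · rw [gammaPath, if_neg hq.ne', ← hpz, Real.zero_rpow hne, mul_zero]; exact hnn
  · rw [gamma_eq_of_pos q0 p hp hq, gamma_eq_of_pos q0 p hp hq, gamma_eq_of_pos q0 p hp hq,
      ← mul_add]
    exact mul_le_mul_of_nonneg_left (rpow_le_max (div_pos hpz hq) h1 h2) hq.le

lemma integrable_gamma_between (μ : Measure X) (q0 p : X → ℝ)
    (hq0m : Measurable q0) (hpm : Measurable p) (hq0 : ∀ z, 0 ≤ q0 z) (hp : ∀ z, 0 ≤ p z)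
    {η₁ η η₂ : ℝ} (hi1 : Integrable (gammaPath q0 p η₁) μ)
    (hi2 : Integrable (gammaPath q0 p η₂) μ)
    (h1 : η₁ ≤ η) (h2 : η ≤ η₂) (hne : η ≠ 0) :
    Integrable (gammaPath q0 p η) μ := by
  refine (hi1.add hi2).mono' (gamma_meas q0 p hq0m hpm η).aestronglyMeasurable ?_
  refine ae_of_all _ fun z => ?_
  rw [Real.norm_eq_abs, abs_of_nonneg (gamma_nonneg q0 p hq0 hp η z)]
  exact gamma_le_add q0 p hq0 hp h1 h2 hne z

lemma Z_pos (μ : Measure X) (q0 p : X → ℝ)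
    (hq0 : ∀ z, 0 ≤ q0 z) (hp : ∀ z, 0 ≤ p z)
    (hA : μ {z | 0 < q0 z ∧ 0 < p z} ≠ 0)
    {η : ℝ} (hint : Integrable (gammaPath q0 p η) μ) : 0 < Zpath μ q0 p η := by
  have hnn : 0 ≤ Zpath μ q0 p η := integral_nonneg (gamma_nonneg q0 p hq0 hp η)
  rcases hnn.eq_or_lt with h | h
  · exfalso
    have h0 : (fun z => gammaPath q0 p η z) =ᵐ[μ] 0 :=
      (integral_eq_zero_iff_of_nonneg_ae (ae_of_all _ (gamma_nonneg q0 p hq0 hp η)) hint).mp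
        h.symm
    have h0' : μ {z | ¬ gammaPath q0 p η z = 0} = 0 := by
      simpa [Filter.EventuallyEq, ae_iff] using h0
    apply hA
    refine measure_mono_null (fun z hz => ?_) h0'
    obtain ⟨hq, hpz⟩ := hz
    show ¬ gammaPath q0 p η z = 0
    rw [gammaPath, if_neg hq.ne']
    exact (mul_pos (Real.rpow_pos_of_pos hq _) (Real.rpow_pos_of_pos hpz _)).ne'
  · exact h

lemma gibbs_eq (μ : Measure X) (a b : X → ℝ)
    (hann : ∀ z, 0 ≤ a z) (hbnn : ∀ z, 0 ≤ b z)
    (ha1 : ∫ z, a z ∂μ = 1) (hb1 : ∫ z, b z ∂μ = 1)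
    (hai : Integrable a μ) (hbi : Integrable b μ)
    (hsupp : ∀ᵐ z ∂μ, 0 < a z → 0 < b z)
    (hint : Integrable (fun z => a z * Real.log (b z / a z)) μ)
    (hzero : ∫ z, a z * Real.log (b z / a z) ∂μ = 0) :
    a =ᵐ[μ] b := by
  set f : X → ℝ := fun z => b z - a z - a z * Real.log (b z / a z) with hf
  have hfi : Integrable f μ := (hbi.sub hai).sub hint
  have hfint : ∫ z, f z ∂μ = 0 := by
    have hba : Integrable (fun z => b z - a z) μ := hbi.sub hai
    have : ∫ z, f z ∂μ = ∫ z, (b z - a z) - a z * Real.log (b z / a z) ∂μ := rfl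
    rw [this, integral_sub hba hint, integral_sub hbi hai, ha1, hb1, hzero]
    ring
  have hfnn : 0 ≤ᵐ[μ] f := by
    filter_upwards [hsupp] with z hz
    rcases (hann z).eq_or_lt with ha | ha
    · have : f z = b z := by simp [hf, ← ha]
      rw [Pi.zero_apply, this]
      exact hbnn z
    · have hb := hz ha
      have hlog := Real.log_le_sub_one_of_pos (div_pos hb ha)
      have h1 : a z * Real.log (b z / a z) ≤ a z * (b z / a z - 1) :=
        mul_le_mul_of_nonneg_left hlog ha.le
      have he : a z * (b z / a z - 1) = b z - a z := by field_simp
      have : f z = b z - a z - a z * Real.log (b z / a z) := rfl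
      rw [Pi.zero_apply, this]
      linarith
  have hf0 : f =ᵐ[μ] 0 := (integral_eq_zero_iff_of_nonneg_ae hfnn hfi).mp hfint
  filter_upwards [hsupp, hf0] with z hz hfz
  have hfz' : b z - a z - a z * Real.log (b z / a z) = 0 := hfz
  rcases (hann z).eq_or_lt with ha | ha
  · have hb0 : b z = 0 := by
      rw [← ha] at hfz'
      simpa using hfz'
    rw [← ha, hb0]
  · have hb := hz ha
    by_contra hne
    have hne' : b z / a z ≠ 1 := by
      intro h1
      exact hne ((div_eq_one_iff_eq ha.ne').mp h1).symm
    have hlt := Real.log_lt_sub_one_of_pos (div_pos hb ha) hne'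
    have h1 : a z * Real.log (b z / a z) < a z * (b z / a z - 1) :=
      mul_lt_mul_of_pos_left hlt ha
    have he : a z * (b z / a z - 1) = b z - a z := by field_simp
    linarith

lemma support_ae (μ : Measure X) (q0 p : X → ℝ)
    (hq0m : Measurable q0) (hpm : Measurable p)
    (hq0 : ∀ z, 0 ≤ q0 z) (hp : ∀ z, 0 ≤ p z)
    (hq0one : ∫ z, q0 z ∂μ = 1)
    (hq0i : Integrable q0 μ) (hpi : Integrable p μ)
    (hZ : ∀ η ∈ Set.Icc (0:ℝ) 1, Integrable (gammaPath q0 p η) μ ∧ 0 < Zpath μ q0 p η)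
    (hcont : ContinuousAt (fun t => Real.log (Zpath μ q0 p t)) 0) :
    ∀ᵐ z ∂μ, 0 < q0 z → 0 < p z := by
  set g : X → ℝ := fun z => if 0 < p z then q0 z else 0 with hg
  have hZ0 : Zpath μ q0 p 0 = 1 := by
    have : ∀ z, gammaPath q0 p 0 z = q0 z := gamma_zero q0 p
    rw [Zpath]
    simp only [this]
    exact hq0one
  have hIoo : Set.Ioo (0:ℝ) 1 ∈ 𝓝[>] (0:ℝ) :=
    Ioo_mem_nhdsGT_of_mem ⟨le_refl 0, zero_lt_one⟩
  have tendsto1 : Tendsto (fun η => Zpath μ q0 p η) (𝓝[>] (0:ℝ)) (𝓝 1) := by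
    have hlog : Tendsto (fun t => Real.log (Zpath μ q0 p t)) (𝓝[>] (0:ℝ)) (𝓝 0) := by
      have h0 : Real.log (Zpath μ q0 p 0) = 0 := by rw [hZ0, Real.log_one]
      have := hcont.tendsto.mono_left (nhdsWithin_le_nhds (s := Set.Ioi (0:ℝ)))
      rwa [h0] at this
    have hexp : Tendsto (fun η => Real.exp (Real.log (Zpath μ q0 p η))) (𝓝[>] (0:ℝ))
        (𝓝 1) := by
      have := (Real.continuous_exp.tendsto 0).comp hlog
      rwa [Real.exp_zero] at this
    refine hexp.congr' ?_
    filter_upwards [hIoo] with η hη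
    exact Real.exp_log (hZ η ⟨hη.1.le, hη.2.le⟩).2
  have tendsto2 : Tendsto (fun η => Zpath μ q0 p η) (𝓝[>] (0:ℝ)) (𝓝 (∫ z, g z ∂μ)) := by
    refine tendsto_integral_filter_of_dominated_convergence (fun z => q0 z + p z)
      (Eventually.of_forall fun η => (gamma_meas q0 p hq0m hpm η).aestronglyMeasurable)
      ?_ (hq0i.add hpi) ?_
    · filter_upwards [hIoo] with η hη
      refine ae_of_all _ fun z => ?_
      rw [Real.norm_eq_abs, abs_of_nonneg (gamma_nonneg q0 p hq0 hp η z)]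
      have hb := gamma_le_add q0 p hq0 hp hη.1.le hη.2.le (ne_of_gt hη.1) z
      have h0 : gammaPath q0 p 0 z = q0 z := gamma_zero q0 p z
      have h1 : gammaPath q0 p 1 z ≤ p z := by
        rw [gammaPath]; split
        · exact hp z
        · rw [sub_self, Real.rpow_zero, Real.rpow_one, one_mul]
      linarith
    · refine ae_of_all _ fun z => ?_
      rcases (hq0 z).eq_or_lt with hq | hq
      · have hgz : g z = 0 := by
          rw [hg]; simp only; split <;> [exact hq.symm; rfl]
        have hfz : (fun η => gammaPath q0 p η z) = fun _ => (0:ℝ) := by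
          funext η; rw [gammaPath, if_pos hq.symm]
        rw [hfz, hgz]
        exact tendsto_const_nhds
      rcases (hp z).eq_or_lt with hpz | hpz
      · have hgz : g z = 0 := by
          rw [hg]; simp only; rw [if_neg]; rw [← hpz]; exact lt_irrefl 0
        rw [hgz]
        refine Tendsto.congr' ?_ tendsto_const_nhds
        filter_upwards [self_mem_nhdsWithin] with η (hη : η ∈ Set.Ioi (0:ℝ))
        rw [gammaPath, if_neg hq.ne', ← hpz, Real.zero_rpow (ne_of_gt hη), mul_zero]
      · have hgz : g z = q0 z := by rw [hg]; simp only; rw [if_pos hpz]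
        have hc : Continuous (fun η : ℝ =>
            Real.exp (Real.log (q0 z) * (1 - η)) * Real.exp (Real.log (p z) * η)) := by
          fun_prop
        have := (hc.tendsto 0).mono_left (nhdsWithin_le_nhds (s := Set.Ioi (0:ℝ)))
        simp only [sub_zero, mul_one, mul_zero, Real.exp_zero] at this
        rw [Real.exp_log hq] at this
        rw [hgz]
        refine Tendsto.congr ?_ (by simpa using this)
        intro η
        rw [gammaPath, if_neg hq.ne', Real.rpow_def_of_pos hq, Real.rpow_def_of_pos hpz]
  have hg1 : ∫ z, g z ∂μ = 1 := tendsto_nhds_unique tendsto2 tendsto1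
  have hgm : Measurable g := Measurable.ite (measurableSet_lt measurable_const hpm)
    hq0m measurable_const
  have hgle : ∀ z, g z ≤ q0 z := by
    intro z; rw [hg]; simp only; split
    · exact le_refl _
    · exact hq0 z
  have hgnn : ∀ z, 0 ≤ g z := by
    intro z; rw [hg]; simp only; split
    · exact hq0 z
    · exact le_refl _
  have hgi : Integrable g μ := hq0i.mono' hgm.aestronglyMeasurable
    (ae_of_all _ fun z => by rw [Real.norm_eq_abs, abs_of_nonneg (hgnn z)]; exact hgle z)
  have hdiff : ∫ z, q0 z - g z ∂μ = 0 := by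
    rw [integral_sub hq0i hgi, hq0one, hg1]; ring
  have hdnn : 0 ≤ᵐ[μ] fun z => q0 z - g z :=
    ae_of_all _ fun z => by simp only [Pi.zero_apply]; linarith [hgle z]
  have h0 : (fun z => q0 z - g z) =ᵐ[μ] 0 :=
    (integral_eq_zero_iff_of_nonneg_ae hdnn (hq0i.sub hgi)).mp hdiff
  filter_upwards [h0] with z hz hqz
  have hz' : q0 z - g z = 0 := hz
  by_contra hpz
  have hgz : g z = 0 := by rw [hg]; simp only; rw [if_neg hpz]
  rw [hgz, sub_zero] at hz'
  exact absurd hz' hqz.ne'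

end CEAux

/-- If `L = log Z` is differentiable at `β` with `L′(β) = ∫ π_β ℓ dμ`, then the
cross-entropy `h_β(η) = −∫ π_β log π_η dμ` is differentiable at `η = β` with `h_β′(β) = 0`:
the first-order Taylor term of `h_β` around `β` vanishes. -/
theorem cross_entropy_first_derivative_vanishes
    (μ : Measure X) [SigmaFinite μ] (q0 p : X → ℝ)
    (hq0m : Measurable q0) (hq0nn : ∀ z, 0 ≤ q0 z) (hq0one : ∫ z, q0 z ∂μ = 1)
    (hpm : Measurable p) (hpnn : ∀ z, 0 ≤ p z) (hpone : ∫ z, p z ∂μ = 1)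
    (hsupp : ∀ᵐ z ∂μ, 0 < p z → 0 < q0 z)
    (hZ : ∀ η ∈ Set.Icc (0 : ℝ) 1,
      Integrable (gammaPath q0 p η) μ ∧ 0 < Zpath μ q0 p η)
    (β : ℝ) (hβ : β ∈ Set.Icc (0 : ℝ) 1)
    (hellint : Integrable (fun z => piPath μ q0 p β z * |ell q0 p z|) μ)
    (hlogq0int : Integrable (fun z => piPath μ q0 p β z * |Real.log (q0 z)|) μ)
    (hL : HasDerivAt (fun t => Real.log (Zpath μ q0 p t))
      (∫ z, piPath μ q0 p β z * ell q0 p z ∂μ) β) :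
    HasDerivAt (fun η => -∫ z, piPath μ q0 p β z * Real.log (piPath μ q0 p η z) ∂μ)
      0 β := by
  classical
  have hq0i : Integrable q0 μ := by
    by_contra h; rw [integral_undef h] at hq0one; norm_num at hq0one
  have hpi : Integrable p μ := by
    by_contra h; rw [integral_undef h] at hpone; norm_num at hpone
  have hZ0eq : Zpath μ q0 p 0 = 1 := by
    have : ∀ z, gammaPath q0 p 0 z = q0 z := CEAux.gamma_zero q0 p
    rw [Zpath]; simp only [this]; exact hq0one
  have hγ1ae : gammaPath q0 p 1 =ᵐ[μ] p := by
    filter_upwards [hsupp] with z hz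
    rw [gammaPath]
    split
    next h =>
      have hnp : ¬ 0 < p z := fun hp' => absurd (hz hp') (by rw [h]; exact lt_irrefl 0)
      exact (le_antisymm (not_lt.mp hnp) (hpnn z)).symm
    next h => rw [sub_self, Real.rpow_zero, Real.rpow_one, one_mul]
  have hZ1eq : Zpath μ q0 p 1 = 1 := by
    rw [Zpath, integral_congr_ae hγ1ae, hpone]
  have hA : μ {z | 0 < q0 z ∧ 0 < p z} ≠ 0 := by
    intro hA0
    have hZh := hZ (1/2) (by norm_num)
    have h0' : ∀ᵐ z ∂μ, gammaPath q0 p (1/2) z = 0 := by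
      rw [ae_iff]
      refine measure_mono_null (fun z hz => ?_) hA0
      by_contra hzA
      apply hz
      rw [gammaPath]
      split
      next => rfl
      next h =>
        have hq : 0 < q0 z := (hq0nn z).lt_of_ne (Ne.symm h)
        have hp0 : p z = 0 := by
          by_contra hp0
          exact hzA ⟨hq, (hpnn z).lt_of_ne (Ne.symm hp0)⟩
        rw [hp0, Real.zero_rpow (by norm_num), mul_zero]
    have hz0 : Zpath μ q0 p (1/2) = 0 := by
      rw [Zpath]; exact integral_eq_zero_of_ae h0'
    rw [hz0] at hZh
    exact lt_irrefl 0 hZh.2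
  have hZβ := hZ β hβ
  have hπβm : Measurable (piPath μ q0 p β) := (CEAux.gamma_meas q0 p hq0m hpm β).div_const _
  have hπβnn : ∀ z, 0 ≤ piPath μ q0 p β z :=
    fun z => div_nonneg (CEAux.gamma_nonneg q0 p hq0nn hpnn β z) hZβ.2.le
  have hℓm : Measurable (ell q0 p) := Real.measurable_log.comp (hpm.div hq0m)
  have hint_m : Integrable (fun z => piPath μ q0 p β z * ell q0 p z) μ := by
    refine hellint.mono' (hπβm.mul hℓm).aestronglyMeasurable (ae_of_all _ fun z => ?_)
    rw [Real.norm_eq_abs, abs_mul, abs_of_nonneg (hπβnn z)]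
  have hint_c : Integrable (fun z => piPath μ q0 p β z * Real.log (q0 z)) μ := by
    refine hlogq0int.mono' (hπβm.mul (Real.measurable_log.comp hq0m)).aestronglyMeasurable
      (ae_of_all _ fun z => ?_)
    rw [Real.norm_eq_abs, abs_mul, abs_of_nonneg (hπβnn z)]
  have hπint : Integrable (piPath μ q0 p β) μ := hZβ.1.div_const _
  have hπone : ∫ z, piPath μ q0 p β z ∂μ = 1 := by
    have h1 : ∫ z, piPath μ q0 p β z ∂μ = (∫ z, gammaPath q0 p β z ∂μ) / Zpath μ q0 p β := by
      simp only [piPath]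
      exact integral_div _ _
    have h2 : ∫ z, gammaPath q0 p β z ∂μ = Zpath μ q0 p β := rfl
    rw [h1, h2, div_self hZβ.2.ne']
  -- a.e. support of π_β consists of points where both q0 and p are positive
  have hsuppβ : ∀ᵐ z ∂μ, piPath μ q0 p β z ≠ 0 → 0 < q0 z ∧ 0 < p z := by
    by_cases hb0 : β = 0
    · subst hb0
      have hs := CEAux.support_ae μ q0 p hq0m hpm hq0nn hpnn hq0one hq0i hpi hZ
        hL.continuousAt
      filter_upwards [hs] with z hsz hne
      have hγ : gammaPath q0 p 0 z ≠ 0 := fun h => hne (by rw [piPath, h, zero_div])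
      rw [CEAux.gamma_zero q0 p z] at hγ
      have hq : 0 < q0 z := (hq0nn z).lt_of_ne (Ne.symm hγ)
      exact ⟨hq, hsz hq⟩
    · refine ae_of_all _ fun z hne => ?_
      have hγ : gammaPath q0 p β z ≠ 0 := fun h => hne (by rw [piPath, h, zero_div])
      rw [gammaPath] at hγ
      by_cases hq : q0 z = 0
      · rw [if_pos hq] at hγ; exact absurd rfl hγ
      · rw [if_neg hq] at hγ
        have hq' : 0 < q0 z := (hq0nn z).lt_of_ne (Ne.symm hq)
        refine ⟨hq', ?_⟩
        by_contra hp'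
        have hp0 : p z = 0 := le_antisymm (not_lt.mp hp') (hpnn z)
        rw [hp0, Real.zero_rpow hb0, mul_zero] at hγ
        exact hγ rfl
  -- the path is integrable with positive normalization in a neighborhood of β
  have hNbhd : ∀ᶠ η in nhds β, Integrable (gammaPath q0 p η) μ ∧ 0 < Zpath μ q0 p η := by
    rcases eq_or_lt_of_le hβ.1 with h0 | h0
    · -- β = 0
      have hb : β = 0 := h0.symm
      subst hb
      by_cases hex : ∃ η' < (0:ℝ), Integrable (gammaPath q0 p η') μ
      · obtain ⟨η₀, hη₀, hiη₀⟩ := hex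
        have hIoo : Set.Ioo η₀ (1:ℝ) ∈ nhds (0:ℝ) := Ioo_mem_nhds hη₀ zero_lt_one
        filter_upwards [hIoo] with η hη
        have hint : Integrable (gammaPath q0 p η) μ := by
          rcases le_or_gt 0 η with h | h
          · exact (hZ η ⟨h, hη.2.le⟩).1
          · exact CEAux.integrable_gamma_between μ q0 p hq0m hpm hq0nn hpnn hiη₀
              (hZ 0 ⟨le_refl 0, zero_le_one⟩).1 hη.1.le h.le (ne_of_lt h)
        exact ⟨hint, CEAux.Z_pos μ q0 p hq0nn hpnn hA hint⟩
      · exfalso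
        push_neg at hex
        have hm0 : (∫ z, piPath μ q0 p 0 z * ell q0 p z ∂μ) = 0 := by
          have hslope := hasDerivAt_iff_tendsto_slope.mp hL
          have h1 : Tendsto (slope (fun t => Real.log (Zpath μ q0 p t)) 0)
              (nhdsWithin (0:ℝ) (Set.Iio 0))
              (nhds (∫ z, piPath μ q0 p 0 z * ell q0 p z ∂μ)) :=
            hslope.mono_left (nhdsWithin_mono _ fun x hx => ne_of_lt hx)
          have h2 : Tendsto (fun _ : ℝ => (0:ℝ)) (nhdsWithin (0:ℝ) (Set.Iio 0))
              (nhds (∫ z, piPath μ q0 p 0 z * ell q0 p z ∂μ)) := by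
            refine Tendsto.congr' ?_ h1
            filter_upwards [self_mem_nhdsWithin] with η (hη : η ∈ Set.Iio (0:ℝ))
            have hZη : Zpath μ q0 p η = 0 := integral_undef (hex η hη)
            have hs : slope (fun t => Real.log (Zpath μ q0 p t)) 0 η
                = (Real.log (Zpath μ q0 p η) - Real.log (Zpath μ q0 p 0)) / (η - 0) :=
              slope_def_field _ _ _
            rw [hs, hZη, Real.log_zero, hZ0eq, Real.log_one]
            norm_num
          exact tendsto_nhds_unique h2 tendsto_const_nhds
        have hpi0 : ∀ z, piPath μ q0 p 0 z = q0 z := fun z => by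
          rw [piPath, hZ0eq, div_one, CEAux.gamma_zero]
        have heqf : (fun z => piPath μ q0 p 0 z * ell q0 p z)
            = fun z => q0 z * Real.log (p z / q0 z) := by
          funext z; rw [hpi0]; rfl
        have hint' : Integrable (fun z => q0 z * Real.log (p z / q0 z)) μ := by
          rw [← heqf]; exact hint_m
        have hzero' : ∫ z, q0 z * Real.log (p z / q0 z) ∂μ = 0 := by
          rw [← heqf]; exact hm0
        have hsupp' : ∀ᵐ z ∂μ, 0 < q0 z → 0 < p z := by
          filter_upwards [hsuppβ] with z hsz hq
          exact (hsz (by rw [hpi0]; exact hq.ne')).2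
        have heq : q0 =ᵐ[μ] p :=
          CEAux.gibbs_eq μ q0 p hq0nn hpnn hq0one hpone hq0i hpi hsupp' hint' hzero'
        have hcontra : Integrable (gammaPath q0 p (-1)) μ := by
          refine hq0i.congr ?_
          filter_upwards [heq] with z hz
          exact (CEAux.gamma_congr_self q0 p hq0nn hz (-1)).symm
        exact hex (-1) (by norm_num) hcontra
    · rcases eq_or_lt_of_le hβ.2 with h1 | h1
      · -- β = 1
        subst h1
        by_cases hex : ∃ η' > (1:ℝ), Integrable (gammaPath q0 p η') μ
        · obtain ⟨η₂, hη₂, hiη₂⟩ := hex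
          have hIoo : Set.Ioo (0:ℝ) η₂ ∈ nhds (1:ℝ) := Ioo_mem_nhds zero_lt_one hη₂
          filter_upwards [hIoo] with η hη
          have hint : Integrable (gammaPath q0 p η) μ := by
            rcases le_or_gt η 1 with h | h
            · exact (hZ η ⟨hη.1.le, h⟩).1
            · exact CEAux.integrable_gamma_between μ q0 p hq0m hpm hq0nn hpnn
                (hZ 1 ⟨zero_le_one, le_refl 1⟩).1 hiη₂ h.le hη.2.le hη.1.ne'
          exact ⟨hint, CEAux.Z_pos μ q0 p hq0nn hpnn hA hint⟩
        · exfalso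
          push_neg at hex
          have hm0 : (∫ z, piPath μ q0 p 1 z * ell q0 p z ∂μ) = 0 := by
            have hslope := hasDerivAt_iff_tendsto_slope.mp hL
            have hh1 : Tendsto (slope (fun t => Real.log (Zpath μ q0 p t)) 1)
                (nhdsWithin (1:ℝ) (Set.Ioi 1))
                (nhds (∫ z, piPath μ q0 p 1 z * ell q0 p z ∂μ)) :=
              hslope.mono_left (nhdsWithin_mono _ fun x hx => ne_of_gt hx)
            have hh2 : Tendsto (fun _ : ℝ => (0:ℝ)) (nhdsWithin (1:ℝ) (Set.Ioi 1))
                (nhds (∫ z, piPath μ q0 p 1 z * ell q0 p z ∂μ)) := by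
              refine Tendsto.congr' ?_ hh1
              filter_upwards [self_mem_nhdsWithin] with η (hη : η ∈ Set.Ioi (1:ℝ))
              have hZη : Zpath μ q0 p η = 0 := integral_undef (hex η hη)
              have hs : slope (fun t => Real.log (Zpath μ q0 p t)) 1 η
                  = (Real.log (Zpath μ q0 p η) - Real.log (Zpath μ q0 p 1)) / (η - 1) :=
                slope_def_field _ _ _
              rw [hs, hZη, Real.log_zero, hZ1eq, Real.log_one]
              norm_num
            exact tendsto_nhds_unique hh2 tendsto_const_nhds
          have hπ1 : piPath μ q0 p 1 =ᵐ[μ] p := by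
            filter_upwards [hγ1ae] with z hz
            rw [piPath, hZ1eq, div_one, hz]
          have hint'' : Integrable (fun z => p z * Real.log (q0 z / p z)) μ := by
            refine hellint.mono'
              ((hpm.mul (Real.measurable_log.comp (hq0m.div hpm)))).aestronglyMeasurable ?_
            filter_upwards [hπ1] with z hz
            rw [Real.norm_eq_abs, abs_mul, abs_of_nonneg (hpnn z), hz]
            simp only [ell]
            rw [show q0 z / p z = (p z / q0 z)⁻¹ from (inv_div _ _).symm, Real.log_inv,
              abs_neg]
          have hneg : (fun z => p z * Real.log (q0 z / p z)) =ᵐ[μ]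
              (fun z => -(piPath μ q0 p 1 z * ell q0 p z)) := by
            filter_upwards [hπ1] with z hz
            simp only [ell]
            rw [hz, show q0 z / p z = (p z / q0 z)⁻¹ from (inv_div _ _).symm, Real.log_inv]
            ring
          have hzero'' : ∫ z, p z * Real.log (q0 z / p z) ∂μ = 0 := by
            rw [integral_congr_ae hneg, integral_neg, hm0, neg_zero]
          have heq : p =ᵐ[μ] q0 :=
            CEAux.gibbs_eq μ p q0 hpnn hq0nn hpone hq0one hpi hq0i hsupp hint'' hzero''
          have hcontra : Integrable (gammaPath q0 p 2) μ := by
            refine hq0i.congr ?_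
            filter_upwards [heq] with z hz
            exact (CEAux.gamma_congr_self q0 p hq0nn hz.symm 2).symm
          exact hex 2 one_lt_two hcontra
      · -- 0 < β < 1
        filter_upwards [Ioo_mem_nhds h0 h1] with η hη
        exact hZ η ⟨hη.1.le, hη.2.le⟩
  -- the cross-entropy agrees near β with L η - c - η m
  have hev : (fun η => -∫ z, piPath μ q0 p β z * Real.log (piPath μ q0 p η z) ∂μ)
      =ᶠ[nhds β] fun η => Real.log (Zpath μ q0 p η)
        - (∫ z, piPath μ q0 p β z * Real.log (q0 z) ∂μ)
        - η * (∫ z, piPath μ q0 p β z * ell q0 p z ∂μ) := by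
    filter_upwards [hNbhd] with η hη
    obtain ⟨hintη, hZη⟩ := hη
    have hkey : ∀ᵐ z ∂μ, piPath μ q0 p β z * Real.log (piPath μ q0 p η z)
        = (piPath μ q0 p β z * Real.log (q0 z)
            + η * (piPath μ q0 p β z * ell q0 p z))
          - piPath μ q0 p β z * Real.log (Zpath μ q0 p η) := by
      filter_upwards [hsuppβ] with z hz
      by_cases h0 : piPath μ q0 p β z = 0
      · rw [h0]; ring
      · obtain ⟨hq, hp'⟩ := hz h0
        have hγ : gammaPath q0 p η z = q0 z ^ (1-η) * p z ^ η := if_neg hq.ne'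
        have hq1 : (0:ℝ) < q0 z ^ (1-η) := Real.rpow_pos_of_pos hq _
        have hp1 : (0:ℝ) < p z ^ η := Real.rpow_pos_of_pos hp' _
        have hγpos : 0 < gammaPath q0 p η z := by rw [hγ]; exact mul_pos hq1 hp1
        rw [show piPath μ q0 p η z = gammaPath q0 p η z / Zpath μ q0 p η from rfl,
          Real.log_div hγpos.ne' hZη.ne', hγ, Real.log_mul hq1.ne' hp1.ne',
          Real.log_rpow hq, Real.log_rpow hp']
        simp only [ell]
        rw [Real.log_div hp'.ne' hq.ne']
        ring
    rw [integral_congr_ae hkey]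
    have hintsum : Integrable (fun z => piPath μ q0 p β z * Real.log (q0 z)
        + η * (piPath μ q0 p β z * ell q0 p z)) μ := hint_c.add (hint_m.const_mul η)
    have hintc2 : Integrable (fun z => piPath μ q0 p β z * Real.log (Zpath μ q0 p η)) μ :=
      hπint.mul_const _
    rw [integral_sub hintsum hintc2, integral_add hint_c (hint_m.const_mul η),
      integral_const_mul, integral_mul_const, hπone]
    ring
  have hd : HasDerivAt (fun η : ℝ => Real.log (Zpath μ q0 p η)
      - (∫ z, piPath μ q0 p β z * Real.log (q0 z) ∂μ)
      - η * (∫ z, piPath μ q0 p β z * ell q0 p z ∂μ)) 0 β := by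
    have h1 := (hL.sub_const (∫ z, piPath μ q0 p β z * Real.log (q0 z) ∂μ)).sub
      (hasDerivAt_mul_const (∫ z, piPath μ q0 p β z * ell q0 p z ∂μ))
    simp at h1
    exact h1
  exact hd.congr_of_eventuallyEq hev
end
end

section
/- Suppose L is twice continuously differentiable on [0,1] with L′(η) = ∫ π_η ℓ dμ for all η ∈ [0,1] (in particular ∫ π_η |ℓ| dμ < ∞ for all η). Then ∫₀¹ L″(η) dη = L′(1) − L′(0) = D_KL(p ‖ q₀) + D_KL(q₀ ‖ p), i.e., the integral over the annealing parameter of the second derivative of the log-normalizer equals the symmetrized Kullback–Leibler divergence between the initial distribution q₀ and the target distribution p. -/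
open MeasureTheory Real Filter

noncomputable section

variable {X : Type*} [MeasurableSpace X]

/-- If `L = log Z` is twice continuously differentiable on `[0,1]` with
`L′(η) = ∫ π_η ℓ dμ`, then `∫₀¹ L″(η) dη = L′(1) − L′(0) = D_KL(p‖q₀) + D_KL(q₀‖p)`. -/
theorem integral_second_derivative_eq_symmetrized_kl
    (μ : Measure X) [SigmaFinite μ] (q0 p : X → ℝ)
    (hq0m : Measurable q0) (hq0nn : ∀ z, 0 ≤ q0 z) (hq0one : ∫ z, q0 z ∂μ = 1)
    (hpm : Measurable p) (hpnn : ∀ z, 0 ≤ p z) (hpone : ∫ z, p z ∂μ = 1)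
    (hsupp : ∀ᵐ z ∂μ, 0 < p z → 0 < q0 z)
    (hZ : ∀ η ∈ Set.Icc (0 : ℝ) 1,
      Integrable (gammaPath q0 p η) μ ∧ 0 < Zpath μ q0 p η)
    (hπℓint : ∀ η ∈ Set.Icc (0 : ℝ) 1,
      Integrable (fun z => piPath μ q0 p η z * |ell q0 p z|) μ)
    (L'' : ℝ → ℝ)
    (hL' : ∀ η ∈ Set.Icc (0 : ℝ) 1,
      HasDerivWithinAt (fun t => Real.log (Zpath μ q0 p t))
        (∫ z, piPath μ q0 p η z * ell q0 p z ∂μ) (Set.Icc 0 1) η)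
    (hL'' : ∀ η ∈ Set.Icc (0 : ℝ) 1,
      HasDerivWithinAt (fun t => ∫ z, piPath μ q0 p t z * ell q0 p z ∂μ)
        (L'' η) (Set.Icc 0 1) η)
    (hL''cont : ContinuousOn L'' (Set.Icc 0 1)) :
    (∫ η in (0 : ℝ)..1, L'' η)
        = (∫ z, piPath μ q0 p 1 z * ell q0 p z ∂μ)
          - (∫ z, piPath μ q0 p 0 z * ell q0 p z ∂μ) ∧
    (∫ η in (0 : ℝ)..1, L'' η) = KLdiv μ p q0 + KLdiv μ q0 p := by
  -- FTC part
  have h1 : (∫ η in (0 : ℝ)..1, L'' η)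
      = (∫ z, piPath μ q0 p 1 z * ell q0 p z ∂μ)
        - (∫ z, piPath μ q0 p 0 z * ell q0 p z ∂μ) := by
    apply intervalIntegral.integral_eq_sub_of_hasDeriv_right_of_le
      (f := fun t => ∫ z, piPath μ q0 p t z * ell q0 p z ∂μ) zero_le_one
    · intro x hx
      exact (hL'' x hx).continuousWithinAt
    · intro x hx
      have hx' : x ∈ Set.Icc (0:ℝ) 1 := Set.Ioo_subset_Icc_self hx
      exact ((hL'' x hx').hasDerivAt (Icc_mem_nhds hx.1 hx.2)).hasDerivWithinAt
    · exact hL''cont.intervalIntegrable_of_Icc zero_le_one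
  refine ⟨h1, ?_⟩
  -- γ₀ = q₀ everywhere
  have hγ0 : gammaPath q0 p 0 = q0 := by
    funext z
    by_cases h : q0 z = 0
    · simp [gammaPath, h]
    · simp [gammaPath, h, Real.rpow_one]
  have hZ0 : Zpath μ q0 p 0 = 1 := by
    simp [Zpath, hγ0, hq0one]
  have hπ0 : piPath μ q0 p 0 = q0 := by
    funext z
    simp [piPath, hγ0, hZ0]
  -- γ₁ = p almost everywhere
  have hγ1 : gammaPath q0 p 1 =ᵐ[μ] p := by
    filter_upwards [hsupp] with z hz
    by_cases h : q0 z = 0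
    · have hp0 : p z = 0 := by
        by_contra hp
        have hpz : 0 < p z := (hpnn z).lt_of_ne (fun e => hp e.symm)
        exact absurd h (hz hpz).ne'
      simp [gammaPath, h, hp0]
    · simp [gammaPath, h, Real.rpow_one]
  have hZ1 : Zpath μ q0 p 1 = 1 := by
    unfold Zpath
    rw [integral_congr_ae hγ1, hpone]
  have hπ1 : piPath μ q0 p 1 =ᵐ[μ] p := by
    filter_upwards [hγ1] with z hz
    simp [piPath, hZ1, hz]
  -- F 1 = KL(p‖q0)
  have hF1 : (∫ z, piPath μ q0 p 1 z * ell q0 p z ∂μ) = KLdiv μ p q0 := by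
    have : (∫ z, piPath μ q0 p 1 z * ell q0 p z ∂μ)
        = ∫ z, p z * ell q0 p z ∂μ := by
      apply integral_congr_ae
      filter_upwards [hπ1] with z hz
      rw [hz]
    rw [this]; rfl
  -- F 0 = -KL(q0‖p)
  have hpt : ∀ z, q0 z * Real.log (p z / q0 z) = -(q0 z * Real.log (q0 z / p z)) := by
    intro z
    by_cases hq : q0 z = 0
    · simp [hq]
    · by_cases hp : p z = 0
      · simp [hp]
      · rw [Real.log_div hp hq, Real.log_div hq hp]; ring
  have hF0 : (∫ z, piPath μ q0 p 0 z * ell q0 p z ∂μ) = -KLdiv μ q0 p := by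
    rw [hπ0]
    have : (∫ z, q0 z * ell q0 p z ∂μ)
        = ∫ z, -(q0 z * Real.log (q0 z / p z)) ∂μ := by
      apply integral_congr_ae
      filter_upwards with z
      exact hpt z
    rw [this, integral_neg]; rfl
  rw [h1, hF1, hF0]; ring
end
end
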